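/- arXiv:0806.1694 — 11 statements merged into one kernel-verified Lean document; each statement's English description precedes it below -/
import Mathlib

section
/- If f : ℕ → {-1, 1} is a completely multiplicative function with f(p) = -1 for at least one prime p, then the real number φ = Σ_{n=1}^∞ ((1 + f(n))/2) · 2^(-n) is irrational. -/
noncomputable def tailSum (d : ℕ → ℝ) (m : ℕ) : ℝ := ∑' n : ℕ, d (m + n) * (2 : ℝ)⁻¹ ^ (n + 1)

lemma summable_tail (d : ℕ → ℝ) (hd : ∀ n, d n = 0 ∨ d n = 1) (m : ℕ) :
    Summable (fun n : ℕ => d (m + n) * (2 : ℝ)⁻¹ ^ (n + 1)) := by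
  apply Summable.of_nonneg_of_le (f := fun n : ℕ => (2 : ℝ)⁻¹ ^ (n + 1))
  · intro n; rcases hd (m + n) with h | h <;> rw [h]
    · simp
    · positivity
  · intro n; rcases hd (m + n) with h | h <;> rw [h]
    · simp
    · simp
  · simp_rw [pow_succ]
    exact (summable_geometric_of_lt_one (by norm_num) (by norm_num)).mul_right _

lemma tsum_half_pow : ∑' n : ℕ, (2 : ℝ)⁻¹ ^ (n + 1) = 1 := by
  simp_rw [pow_succ]
  rw [tsum_mul_right, tsum_geometric_of_lt_one (by norm_num) (by norm_num)]
  norm_num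

lemma tail_nonneg (d : ℕ → ℝ) (hd : ∀ n, d n = 0 ∨ d n = 1) (m : ℕ) : 0 ≤ tailSum d m := by
  apply tsum_nonneg
  intro n; rcases hd (m + n) with h | h <;> rw [h] <;> positivity

lemma tail_le_one (d : ℕ → ℝ) (hd : ∀ n, d n = 0 ∨ d n = 1) (m : ℕ) : tailSum d m ≤ 1 := by
  rw [← tsum_half_pow]
  apply Summable.tsum_le_tsum _ (summable_tail d hd m)
  · simp_rw [pow_succ]
    exact (summable_geometric_of_lt_one (by norm_num) (by norm_num)).mul_right _
  · intro n; rcases hd (m + n) with h | h <;> rw [h]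
    · simp
    · simp

lemma tail_rec (d : ℕ → ℝ) (hd : ∀ n, d n = 0 ∨ d n = 1) (m : ℕ) :
    tailSum d m = d m / 2 + tailSum d (m + 1) / 2 := by
  unfold tailSum
  rw [Summable.tsum_eq_zero_add (summable_tail d hd m)]
  congr 1
  · simp; ring
  · rw [eq_div_iff (two_ne_zero), ← tsum_mul_right]
    apply tsum_congr
    intro n
    rw [show m + (n + 1) = m + 1 + n by ring]
    ring

lemma tail_zero (d : ℕ → ℝ) (hd : ∀ n, d n = 0 ∨ d n = 1) (m : ℕ) (h : tailSum d m = 0) :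
    ∀ j, d (m + j) = 0 := by
  intro j
  rcases hd (m + j) with h' | h'
  · exact h'
  exfalso
  have hle := Summable.le_tsum (summable_tail d hd m) j (fun k _ => by
    rcases hd (m + k) with h2 | h2 <;> rw [h2] <;> positivity)
  rw [h'] at hle
  unfold tailSum at h
  rw [h] at hle
  nlinarith [pow_pos (by norm_num : (0:ℝ) < 2⁻¹) (j + 1)]

lemma tail_one (d : ℕ → ℝ) (hd : ∀ n, d n = 0 ∨ d n = 1) (m : ℕ) (h : tailSum d m = 1) :
    ∀ j, d (m + j) = 1 := by
  intro j
  have hs := summable_tail d hd m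
  have hs2 : Summable (fun n : ℕ => (2 : ℝ)⁻¹ ^ (n + 1)) := by
    simp_rw [pow_succ]
    exact (summable_geometric_of_lt_one (by norm_num) (by norm_num)).mul_right _
  have hsub : Summable (fun n : ℕ => (2 : ℝ)⁻¹ ^ (n + 1) - d (m + n) * (2 : ℝ)⁻¹ ^ (n + 1)) :=
    hs2.sub hs
  have htsub : ∑' n : ℕ, ((2 : ℝ)⁻¹ ^ (n + 1) - d (m + n) * (2 : ℝ)⁻¹ ^ (n + 1)) = 0 := by
    rw [Summable.tsum_sub hs2 hs, tsum_half_pow]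
    unfold tailSum at h
    rw [h]; ring
  have hle := Summable.le_tsum hsub j (fun k _ => by
    rcases hd (m + k) with h2 | h2 <;> rw [h2] <;> simp)
  rw [htsub] at hle
  rcases hd (m + j) with h' | h'
  · exfalso; rw [h'] at hle
    nlinarith [pow_pos (by norm_num : (0:ℝ) < 2⁻¹) (j + 1)]
  · exact h'

lemma f_pow (f : ℕ → ℤ) (hf1 : f 1 = 1)
    (hfmul : ∀ m n : ℕ, 1 ≤ m → 1 ≤ n → f (m * n) = f m * f n)
    (p : ℕ) (hp : 1 ≤ p) : ∀ k : ℕ, f (p ^ k) = f p ^ k := by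
  intro k
  induction k with
  | zero => simpa using hf1
  | succ k ih =>
    rw [pow_succ, hfmul _ _ (Nat.one_le_pow _ _ hp) hp, ih, pow_succ]

lemma no_eventually_const (f : ℕ → ℤ) (hf1 : f 1 = 1)
    (hfmul : ∀ m n : ℕ, 1 ≤ m → 1 ≤ n → f (m * n) = f m * f n)
    (p : ℕ) (hp : p.Prime) (hfp : f p = -1)
    (c : ℤ) (N : ℕ) (h : ∀ n, N ≤ n → f n = c) : False := by
  have hp1 : 1 ≤ p := hp.one_lt.le
  have hbig : ∀ e : ℕ, N ≤ p ^ (2 * N + 1 + e) := by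
    intro e
    calc N ≤ 2 * N + 1 + e := by omega
    _ ≤ 2 ^ (2 * N + 1 + e) := by
        exact (Nat.lt_two_pow_self).le
    _ ≤ p ^ (2 * N + 1 + e) := Nat.pow_le_pow_left hp.two_le _
  have h1 : c = -1 := by
    rw [← h _ (hbig 0), f_pow f hf1 hfmul p hp1, hfp]
    have : Odd (2 * N + 1 + 0) := ⟨N, by omega⟩
    exact this.neg_one_pow
  have h2 : c = 1 := by
    rw [← h _ (hbig 1), f_pow f hf1 hfmul p hp1, hfp]
    have : Even (2 * N + 1 + 1) := ⟨N + 1, by omega⟩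
    exact this.neg_one_pow
  omega

lemma no_eventually_periodic (f : ℕ → ℤ) (hf1 : f 1 = 1)
    (hfmul : ∀ m n : ℕ, 1 ≤ m → 1 ≤ n → f (m * n) = f m * f n)
    (hfval : ∀ n : ℕ, 1 ≤ n → f n = 1 ∨ f n = -1)
    (p : ℕ) (hp : p.Prime) (hfp : f p = -1)
    (T N : ℕ) (hT : 1 ≤ T) (hN : 1 ≤ N)
    (h : ∀ n, N ≤ n → f (n + T) = f n) : False := by
  have hstep : ∀ k, N ≤ k → f (k + 1) = f k := by
    intro k hk
    have hk1 : 1 ≤ k := le_trans hN hk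
    have hkT : N ≤ k * T := le_trans hk (Nat.le_mul_of_pos_right _ hT)
    have h1 : f ((k + 1) * T) = f (k * T) := by
      rw [show (k + 1) * T = k * T + T by ring]
      exact h _ hkT
    rw [hfmul _ _ (by omega) hT, hfmul _ _ hk1 hT] at h1
    have hT0 : f T ≠ 0 := by rcases hfval T hT with h' | h' <;> rw [h'] <;> norm_num
    exact mul_right_cancel₀ hT0 h1
  have hconst : ∀ n, N ≤ n → f n = f N := by
    intro n hn
    induction n, hn using Nat.le_induction with
    | base => rfl
    | succ n hn ih => rw [hstep n hn, ih]
  exact no_eventually_const f hf1 hfmul p hp hfp (f N) N hconst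
/-- If `f : ℕ → {-1,1}` is completely multiplicative with `f p = -1`
for at least one prime `p`, then `φ = Σ ((1+f n)/2) 2^(-n)` is irrational. -/
theorem stmt_0 (f : ℕ → ℤ)
    (hf1 : f 1 = 1)
    (hfmul : ∀ m n : ℕ, 1 ≤ m → 1 ≤ n → f (m * n) = f m * f n)
    (hfval : ∀ n : ℕ, 1 ≤ n → f n = 1 ∨ f n = -1)
    (p : ℕ) (hp : p.Prime) (hfp : f p = -1) :
    Irrational (∑' n : ℕ, ((1 + (f (n + 1) : ℝ)) / 2) * (2 : ℝ)⁻¹ ^ (n + 1)) := by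
  set d : ℕ → ℝ := fun n => (1 + (f (n + 1) : ℝ)) / 2 with hd_def
  have hd : ∀ n, d n = 0 ∨ d n = 1 := by
    intro n
    rcases hfval (n + 1) (by omega) with h | h
    · right; simp [hd_def, h]
    · left; simp [hd_def, h]
  have hd0 : ∀ n, d n = 0 → f (n + 1) = -1 := by
    intro n h
    have : (f (n + 1) : ℝ) = -1 := by
      simp only [hd_def] at h
      linarith [div_eq_zero_iff.mp h]
    exact_mod_cast this
  have hd1 : ∀ n, d n = 1 → f (n + 1) = 1 := by
    intro n h
    have : (f (n + 1) : ℝ) = 1 := by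
      simp only [hd_def] at h
      have := (div_eq_one_iff_eq (two_ne_zero)).mp h
      linarith
    exact_mod_cast this
  have hsum_eq : (∑' n : ℕ, ((1 + (f (n + 1) : ℝ)) / 2) * (2 : ℝ)⁻¹ ^ (n + 1)) = tailSum d 0 :=
    tsum_congr (fun n => by rw [Nat.zero_add])
  rw [hsum_eq]
  rintro ⟨q, hq⟩
  -- Case: all digits eventually 0
  by_cases hc0 : ∃ k, tailSum d k = 0
  · obtain ⟨k, hk⟩ := hc0
    refine no_eventually_const f hf1 hfmul p hp hfp (-1) (k + 1) ?_
    intro n hn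
    have := tail_zero d hd k hk (n - 1 - k)
    rw [show k + (n - 1 - k) = n - 1 by omega] at this
    have := hd0 _ this
    rwa [show n - 1 + 1 = n by omega] at this
  -- Case: all digits eventually 1
  by_cases hc1 : ∃ k, tailSum d k = 1
  · obtain ⟨k, hk⟩ := hc1
    refine no_eventually_const f hf1 hfmul p hp hfp 1 (k + 1) ?_
    intro n hn
    have := tail_one d hd k hk (n - 1 - k)
    rw [show k + (n - 1 - k) = n - 1 by omega] at this
    have := hd1 _ this
    rwa [show n - 1 + 1 = n by omega] at this
  push_neg at hc0 hc1
  -- all tails are rationals with denominator q.den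
  have hD : (0 : ℝ) < (q.den : ℝ) := by exact_mod_cast q.pos
  have hz' : ∀ m, ∃ z : ℤ, tailSum d m = (z : ℝ) / (q.den : ℝ) := by
    intro m
    induction m with
    | zero =>
      refine ⟨q.num, ?_⟩
      rw [← hq, Rat.cast_def]
    | succ m ih =>
      obtain ⟨z, hzm⟩ := ih
      have hts : tailSum d (m + 1) = 2 * tailSum d m - d m := by
        linarith [tail_rec d hd m]
      rcases hd m with h | h
      · refine ⟨2 * z, ?_⟩
        rw [hts, hzm, h]
        push_cast
        ring
      · refine ⟨2 * z - q.den, ?_⟩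
        rw [hts, hzm, h]
        field_simp
        norm_cast
  choose z hz using hz'
  have hzb : ∀ m, z m ∈ Finset.Icc (0 : ℤ) (q.den : ℤ) := by
    intro m
    have h0 := tail_nonneg d hd m
    have h1 := tail_le_one d hd m
    rw [hz m] at h0 h1
    have hzr0 : (0 : ℝ) ≤ (z m : ℝ) := by
      have := mul_le_mul_of_nonneg_right h0 hD.le
      rw [div_mul_cancel₀ _ hD.ne'] at this
      linarith
    have hzr1 : (z m : ℝ) ≤ (q.den : ℝ) := by
      have := mul_le_mul_of_nonneg_right h1 hD.le
      rw [div_mul_cancel₀ _ hD.ne'] at this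
      linarith
    rw [Finset.mem_Icc]
    exact ⟨by exact_mod_cast hzr0, by exact_mod_cast hzr1⟩
  -- pigeonhole
  have hcard : (Finset.Icc (0 : ℤ) (q.den : ℤ)).card < (Finset.range (q.den + 2)).card := by
    rw [Int.card_Icc, Finset.card_range]
    simp
  obtain ⟨a, -, b, -, hab, heqz⟩ :=
    Finset.exists_ne_map_eq_of_card_lt_of_maps_to hcard (fun m _ => hzb m)
  have hteq0 : tailSum d a = tailSum d b := by rw [hz a, hz b, heqz]
  -- wlog a < b
  obtain ⟨m, m', hmm', hteq00⟩ : ∃ m m', m < m' ∧ tailSum d m = tailSum d m' := by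
    rcases hab.lt_or_gt with h | h
    · exact ⟨a, b, h, hteq0⟩
    · exact ⟨b, a, h, hteq0.symm⟩
  -- tails are periodic
  have hteq : ∀ j, tailSum d (m + j) = tailSum d (m' + j) := by
    intro j
    induction j with
    | zero => simpa using hteq00
    | succ j ih =>
      have r1 : tailSum d (m + j + 1) = 2 * tailSum d (m + j) - d (m + j) := by
        linarith [tail_rec d hd (m + j)]
      have r2 : tailSum d (m' + j + 1) = 2 * tailSum d (m' + j) - d (m' + j) := by
        linarith [tail_rec d hd (m' + j)]
      rw [show m + (j + 1) = m + j + 1 by omega, show m' + (j + 1) = m' + j + 1 by omega]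
      rcases hd (m + j) with h1 | h1 <;> rcases hd (m' + j) with h2 | h2
      · rw [r1, r2, h1, h2, ih]
      · refine absurd (a := tailSum d (m + j + 1) = 1) ?_ (hc1 _)
        linarith [tail_nonneg d hd (m' + j + 1), tail_le_one d hd (m + j + 1)]
      · refine absurd (a := tailSum d (m' + j + 1) = 1) ?_ (hc1 _)
        linarith [tail_nonneg d hd (m + j + 1), tail_le_one d hd (m' + j + 1)]
      · rw [r1, r2, h1, h2, ih]
  -- digits are periodic
  have hdeq : ∀ j, d (m + j) = d (m' + j) := by
    intro j
    have h1 := tail_rec d hd (m + j)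
    have h2 := tail_rec d hd (m' + j)
    have h3 := hteq j
    have h4 : tailSum d (m + j + 1) = tailSum d (m' + j + 1) := by
      have := hteq (j + 1)
      rwa [show m + (j + 1) = m + j + 1 by omega,
        show m' + (j + 1) = m' + j + 1 by omega] at this
    linarith
  -- f is periodic
  refine no_eventually_periodic f hf1 hfmul hfval p hp hfp (m' - m) (m + 1)
    (by omega) (by omega) ?_
  intro n hn
  have heqd := hdeq (n - 1 - m)
  rw [show m + (n - 1 - m) = n - 1 by omega,
    show m' + (n - 1 - m) = n - 1 + (m' - m) by omega] at heqd
  have hfeq : f (n - 1 + 1) = f (n - 1 + (m' - m) + 1) := by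
    rcases hd (n - 1) with ha | ha <;> rcases hd (n - 1 + (m' - m)) with hb | hb
    · rw [hd0 _ ha, hd0 _ hb]
    · rw [ha, hb] at heqd; norm_num at heqd
    · rw [ha, hb] at heqd; norm_num at heqd
    · rw [hd1 _ ha, hd1 _ hb]
  rw [show n - 1 + 1 = n by omega, show n - 1 + (m' - m) + 1 = n + (m' - m) by omega] at hfeq
  exact hfeq.symm
end

section
/- The Liouville number l = Σ_{n=1}^∞ ((1 + λ(n))/2) · 2^(-n) is irrational, where λ is the Liouville function. -/
open ArithmeticFunction

namespace Stmt1Aux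

/-- The Liouville function as a real-valued function. -/
noncomputable def L (n : ℕ) : ℝ := (-1 : ℝ) ^ (cardFactors n)

/-- The binary digits. -/
noncomputable def b (n : ℕ) : ℝ := (1 + L (n + 1)) / 2

lemma L_cases' (n : ℕ) : L n = 1 ∨ L n = -1 := by
  unfold L
  rcases Nat.even_or_odd (cardFactors n) with h | h
  · left; exact h.neg_one_pow
  · right; exact h.neg_one_pow

lemma L_ne_zero (n : ℕ) : L n ≠ 0 := by
  rcases L_cases' n with h | h <;> rw [h] <;> norm_num

lemma L_mul_eq {m n : ℕ} (hm : m ≠ 0) (hn : n ≠ 0) : L (m * n) = L m * L n := by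
  unfold L; rw [cardFactors_mul hm hn, pow_add]

lemma L_two : L 2 = -1 := by
  unfold L
  rw [cardFactors_apply_prime Nat.prime_two, pow_one]

lemma L_two_mul {n : ℕ} (hn : n ≠ 0) : L (2 * n) = - L n := by
  rw [L_mul_eq two_ne_zero hn, L_two]; ring

lemma b_cases (n : ℕ) : b n = 0 ∨ b n = 1 := by
  unfold b
  rcases L_cases' (n + 1) with h | h
  · right; rw [h]; norm_num
  · left; rw [h]; norm_num

lemma b_nonneg (n : ℕ) : 0 ≤ b n := by rcases b_cases n with h | h <;> rw [h] <;> norm_num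

lemma b_le_one (n : ℕ) : b n ≤ 1 := by rcases b_cases n with h | h <;> rw [h] <;> norm_num

lemma L_eq_of_b_eq {m n : ℕ} (h : b m = b n) : L (m + 1) = L (n + 1) := by
  unfold b at h
  field_simp at h
  linarith

/-- there are zero digits beyond any point -/
lemma exists_zero (m : ℕ) : ∃ k, m ≤ k ∧ b k = 0 := by
  refine ⟨2 ^ (2 * m + 1) - 1, ?_, ?_⟩
  · have h1 : m + 1 ≤ 2 ^ (2 * m + 1) := by
      calc m + 1 ≤ 2 * m + 1 + 1 := by omega
        _ ≤ 2 ^ (2 * m + 1) := Nat.succ_le_of_lt Nat.lt_two_pow_self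
    omega
  · have h2 : 2 ^ (2 * m + 1) - 1 + 1 = 2 ^ (2 * m + 1) := by
      have : 1 ≤ 2 ^ (2 * m + 1) := Nat.one_le_two_pow
      omega
    unfold b
    rw [h2]
    unfold L
    rw [cardFactors_apply_prime_pow Nat.prime_two, pow_succ, pow_mul]
    norm_num

lemma summable_tail (m : ℕ) : Summable (fun k => b (m + k) * (2 : ℝ)⁻¹ ^ (k + 1)) := by
  apply Summable.of_nonneg_of_le
    (g := fun k => b (m + k) * (2 : ℝ)⁻¹ ^ (k + 1)) (f := fun k => (2 : ℝ)⁻¹ ^ k)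
  · intro k
    exact mul_nonneg (b_nonneg _) (by positivity)
  · intro k
    calc b (m + k) * (2 : ℝ)⁻¹ ^ (k + 1) ≤ 1 * (2 : ℝ)⁻¹ ^ (k + 1) := by
          apply mul_le_mul_of_nonneg_right (b_le_one _) (by positivity)
      _ ≤ (2 : ℝ)⁻¹ ^ k := by
          rw [one_mul]
          apply pow_le_pow_of_le_one (by norm_num) (by norm_num) (by omega)
  · exact summable_geometric_of_lt_one (by norm_num) (by norm_num)

/-- tail sums -/
noncomputable def t (m : ℕ) : ℝ := ∑' k, b (m + k) * (2 : ℝ)⁻¹ ^ (k + 1)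

lemma t_rec (m : ℕ) : t m = b m / 2 + t (m + 1) / 2 := by
  unfold t
  rw [tsum_eq_zero_add' (by
    apply Summable.of_nonneg_of_le (f := fun k => (2 : ℝ)⁻¹ ^ k)
    · intro k; exact mul_nonneg (b_nonneg _) (by positivity)
    · intro k
      calc b (m + (k + 1)) * (2 : ℝ)⁻¹ ^ (k + 1 + 1) ≤ 1 * (2 : ℝ)⁻¹ ^ (k + 1 + 1) :=
            mul_le_mul_of_nonneg_right (b_le_one _) (by positivity)
        _ ≤ (2 : ℝ)⁻¹ ^ k := by
            rw [one_mul]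
            apply pow_le_pow_of_le_one (by norm_num) (by norm_num) (by omega)
    · exact summable_geometric_of_lt_one (by norm_num) (by norm_num))]
  have h1 : ∑' (k : ℕ), b (m + (k + 1)) * (2 : ℝ)⁻¹ ^ (k + 1 + 1)
      = ∑' (k : ℕ), (b (m + 1 + k) * (2 : ℝ)⁻¹ ^ (k + 1)) * 2⁻¹ := by
    apply tsum_congr
    intro k
    have : m + (k + 1) = m + 1 + k := by omega
    rw [this]
    ring
  rw [h1, tsum_mul_right]
  norm_num
  ring

lemma t_nonneg (m : ℕ) : 0 ≤ t m :=
  tsum_nonneg fun k => mul_nonneg (b_nonneg _) (by positivity)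

lemma tsum_half : ∑' (k : ℕ), (2 : ℝ)⁻¹ ^ (k + 1) = 1 := by
  have : ∀ k : ℕ, (2 : ℝ)⁻¹ ^ (k + 1) = (2 : ℝ)⁻¹ ^ k * 2⁻¹ := fun k => pow_succ _ _
  rw [tsum_congr this, tsum_mul_right, tsum_geometric_of_lt_one (by norm_num) (by norm_num)]
  norm_num

lemma t_le_one (m : ℕ) : t m ≤ 1 := by
  unfold t
  rw [← tsum_half]
  apply Summable.tsum_le_tsum _ (summable_tail m)
    (summable_geometric_of_lt_one (r := (2:ℝ)⁻¹) (by norm_num) (by norm_num)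
      |>.mul_right 2⁻¹ |>.congr (fun k => (pow_succ _ _).symm))
  intro k
  calc b (m + k) * (2 : ℝ)⁻¹ ^ (k + 1) ≤ 1 * (2 : ℝ)⁻¹ ^ (k + 1) :=
        mul_le_mul_of_nonneg_right (b_le_one _) (by positivity)
    _ = (2 : ℝ)⁻¹ ^ (k + 1) := one_mul _

lemma t_lt_one (m : ℕ) : t m < 1 := by
  obtain ⟨k, hmk, hbk⟩ := exists_zero m
  -- downward induction from k to m
  have key : ∀ j : ℕ, t (k - j) < 1 := by
    intro j
    induction j with
    | zero =>
      simp only [Nat.sub_zero]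
      rw [t_rec k, hbk]
      have := t_le_one (k + 1)
      linarith
    | succ j ih =>
      by_cases hj : j < k
      · have h1 : k - (j + 1) + 1 = k - j := by omega
        rw [t_rec (k - (j + 1)), h1]
        have h2 := b_le_one (k - (j + 1))
        linarith
      · have : k - (j + 1) = k - j := by omega
        rw [this]; exact ih
  have := key (k - m)
  rwa [Nat.sub_sub_self hmk] at this

lemma digit_determined {m n : ℕ} (h : t m = t n) : b m = b n := by
  rcases b_cases m with hm | hm <;> rcases b_cases n with hn | hn
  · rw [hm, hn]
  · exfalso
    rw [t_rec m, t_rec n, hm, hn] at h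
    have h1 := t_lt_one (m + 1)
    have h2 := t_nonneg (n + 1)
    linarith
  · exfalso
    rw [t_rec m, t_rec n, hm, hn] at h
    have h1 := t_lt_one (n + 1)
    have h2 := t_nonneg (m + 1)
    linarith
  · rw [hm, hn]

/-- 2^m * t 0 differs from t m by an integer. -/
lemma pow_mul_t (m : ℕ) : ∃ z : ℤ, (2 : ℝ) ^ m * t 0 = z + t m := by
  induction m with
  | zero => exact ⟨0, by simp⟩
  | succ m ih =>
    obtain ⟨z, hz⟩ := ih
    rcases b_cases m with hb | hb
    · refine ⟨2 * z, ?_⟩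
      rw [pow_succ, mul_comm ((2:ℝ)^m) 2, mul_assoc, hz, t_rec m, hb]
      push_cast
      ring
    · refine ⟨2 * z + 1, ?_⟩
      rw [pow_succ, mul_comm ((2:ℝ)^m) 2, mul_assoc, hz, t_rec m, hb]
      push_cast
      ring

lemma fract_eq (m : ℕ) : Int.fract ((2 : ℝ) ^ m * t 0) = t m := by
  obtain ⟨z, hz⟩ := pow_mul_t m
  rw [hz, Int.fract_intCast_add, Int.fract_eq_self.2 ⟨t_nonneg m, t_lt_one m⟩]

end Stmt1Aux

open Stmt1Aux in
/-- The Liouville number `l = Σ ((1+λ(n))/2) 2^(-n)` is irrational,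
where `λ(n) = (-1)^Ω(n)` is the Liouville function. -/
theorem stmt_1 :
    Irrational (∑' n : ℕ,
      ((1 + ((-1 : ℝ) ^ (ArithmeticFunction.cardFactors (n + 1)))) / 2)
        * (2 : ℝ)⁻¹ ^ (n + 1)) := by
  have hx : (∑' n : ℕ,
      ((1 + ((-1 : ℝ) ^ (ArithmeticFunction.cardFactors (n + 1)))) / 2)
        * (2 : ℝ)⁻¹ ^ (n + 1)) = t 0 := by
    unfold t b L
    apply tsum_congr
    intro k
    rw [Nat.zero_add]
  rw [hx]
  rw [Irrational]
  intro hmem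
  obtain ⟨q, hq⟩ := hmem
  -- pigeonhole on ZMod q.den
  haveI : NeZero q.den := ⟨q.den_nz⟩
  obtain ⟨i, j, hij, hfij⟩ := Finite.exists_ne_map_eq_of_infinite
    (fun m : ℕ => ((2 ^ m * q.num : ℤ) : ZMod q.den))
  -- wlog i < j
  wlog hlt : i < j generalizing i j
  · exact this j i hij.symm hfij.symm (by omega)
  -- periodicity of fractional parts
  set T := j - i with hT
  have hT0 : 0 < T := by omega
  have hper : ∀ k : ℕ, t (i + k) = t (i + k + T) := by
    intro k
    rw [← fract_eq (i + k), ← fract_eq (i + k + T)]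
    rw [Int.fract_eq_fract]
    have hmod : (((2 ^ (i + k) * q.num - 2 ^ (i + k + T) * q.num : ℤ)) : ZMod q.den) = 0 := by
      push_cast
      have h1 : (2 : ZMod q.den) ^ (i + k) * (q.num : ZMod q.den)
          = 2 ^ k * ((2 ^ i * q.num : ℤ) : ZMod q.den) := by push_cast; ring
      have h2 : (2 : ZMod q.den) ^ (i + k + T) * (q.num : ZMod q.den)
          = 2 ^ k * ((2 ^ j * q.num : ℤ) : ZMod q.den) := by
        have : i + k + T = j + k := by omega
        rw [this]; push_cast; ring
      rw [h1, h2, hfij]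
      ring
    rw [ZMod.intCast_zmod_eq_zero_iff_dvd] at hmod
    obtain ⟨c, hc⟩ := hmod
    refine ⟨c, ?_⟩
    have hden : (q.den : ℝ) ≠ 0 := by
      exact_mod_cast q.den_nz
    have hqr : (t 0 : ℝ) = (q.num : ℝ) / (q.den : ℝ) := by
      rw [← hq, Rat.cast_def]
    rw [hqr]
    have : (2 : ℝ) ^ (i + k) * ((q.num : ℝ) / q.den) - (2:ℝ) ^ (i + k + T) * ((q.num:ℝ) / q.den)
        = ((2 ^ (i + k) * q.num - 2 ^ (i + k + T) * q.num : ℤ) : ℝ) / q.den := by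
      push_cast
      ring
    rw [this, hc]
    push_cast
    field_simp
  -- hence digits are periodic, hence L is periodic
  have hLper : ∀ k : ℕ, L (i + k + 1) = L (i + k + T + 1) := by
    intro k
    exact L_eq_of_b_eq (digit_determined (hper k))
  -- restate: for all n ≥ i + 1, L n = L (n + T)
  have hLper' : ∀ n : ℕ, i + 1 ≤ n → L n = L (n + T) := by
    intro n hn
    have h := hLper (n - i - 1)
    have e1 : i + (n - i - 1) + 1 = n := by omega
    have e2 : i + (n - i - 1) + T + 1 = n + T := by omega
    rwa [e1, e2] at h
  -- L is eventually constant
  set N := i + 1 with hN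
  have hconst : ∀ n : ℕ, N ≤ n → L (n + 1) = L n := by
    intro n hn
    have h1 : L (T * n) = L (T * n + T) := hLper' (T * n) (le_trans hn (Nat.le_mul_of_pos_left n hT0))
    have h2 : T * n + T = T * (n + 1) := by ring
    rw [h2] at h1
    have hn0 : n ≠ 0 := by omega
    rw [L_mul_eq (by omega) hn0, L_mul_eq (by omega) (by omega)] at h1
    exact (mul_left_cancel₀ (L_ne_zero T) h1.symm)
  have hconst' : ∀ n : ℕ, N ≤ n → L n = L N := by
    intro n hn
    induction n with
    | zero => omega
    | succ n ih =>
      by_cases h : N ≤ n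
      · rw [hconst n h, ih h]
      · have : n + 1 = N := by omega
        rw [this]
  -- contradiction with L (2 * N) = - L N
  have hNn : N ≤ 2 * N := by omega
  have h1 := hconst' (2 * N) hNn
  rw [L_two_mul (by omega : N ≠ 0)] at h1
  have := L_ne_zero N
  have : L N = 0 := by linarith [h1]
  exact L_ne_zero N this
end

section
/- The Gaussian Liouville number γ = Σ_{n=1}^∞ ((1 + g(n))/2) · 2^(-n) is irrational, where g is the completely multiplicative function with g(p) = -1 if p ≡ 3 (mod 4) and g(p) = 1 otherwise. -/
section Aux

variable (g : ℕ → ℤ)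

/-- g takes values ±1 on positive integers. -/
lemma stmt2_gpm (hg1 : g 1 = 1)
    (hgmul : ∀ m n : ℕ, 1 ≤ m → 1 ≤ n → g (m * n) = g m * g n)
    (hgp : ∀ p : ℕ, p.Prime → g p = if p % 4 = 3 then -1 else 1) :
    ∀ n : ℕ, 1 ≤ n → g n = 1 ∨ g n = -1 := by
  intro n
  induction n using Nat.strong_induction_on with
  | _ n ih =>
    intro hn
    rcases eq_or_lt_of_le hn with h1 | h2
    · left; exact h1 ▸ hg1
    · have hne : n ≠ 1 := by omega
      obtain ⟨p, pp, m, rfl⟩ : ∃ p, p.Prime ∧ ∃ m, n = p * m := by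
        obtain ⟨p, pp, pd⟩ := Nat.exists_prime_and_dvd hne
        obtain ⟨m, rfl⟩ := pd
        exact ⟨p, pp, m, rfl⟩
      have hp2 : 2 ≤ p := pp.two_le
      have hm1 : 1 ≤ m := by
        rcases Nat.eq_zero_or_pos m with h | h
        · subst h; simp at hn
        · exact h
      have hmlt : m < p * m := by nlinarith
      have hgm := ih m hmlt hm1
      have hgpv : g p = 1 ∨ g p = -1 := by
        rw [hgp p pp]; split <;> simp
      rw [hgmul p m (by omega) hm1]
      rcases hgpv with h | h <;> rcases hgm with h' | h' <;> rw [h, h'] <;> simp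

end Aux

/-- The Gaussian Liouville number `γ = Σ ((1+g(n))/2) 2^(-n)` is irrational,
where `g` is completely multiplicative with `g p = -1` iff `p ≡ 3 (mod 4)`. -/
theorem stmt_2 (g : ℕ → ℤ)
    (hg1 : g 1 = 1)
    (hgmul : ∀ m n : ℕ, 1 ≤ m → 1 ≤ n → g (m * n) = g m * g n)
    (hgp : ∀ p : ℕ, p.Prime → g p = if p % 4 = 3 then -1 else 1) :
    Irrational (∑' n : ℕ, ((1 + (g (n + 1) : ℝ)) / 2) * (2 : ℝ)⁻¹ ^ (n + 1)) := by
  have gpm := stmt2_gpm g hg1 hgmul hgp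
  have hg3 : g 3 = -1 := by
    have := hgp 3 (by norm_num)
    simpa using this
  have gsq : ∀ s : ℕ, 1 ≤ s → g (s * s) = 1 := by
    intro s hs
    rw [hgmul s s hs hs]
    rcases gpm s hs with h | h <;> rw [h] <;> norm_num
  have gneg : ∀ j : ℕ, 1 ≤ j → g (3 * (j * j)) = -1 := by
    intro j hj
    rw [hgmul 3 (j * j) (by norm_num) (by nlinarith), hg3, gsq j hj]
    norm_num
  -- the binary digit sequence
  set b : ℕ → ℝ := fun n => (1 + (g (n + 1) : ℝ)) / 2 with hb
  have hb01 : ∀ n, b n = 0 ∨ b n = 1 := by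
    intro n
    rcases gpm (n + 1) (by omega) with h | h
    · right; simp [hb, h]
    · left; simp [hb, h]
  have hbnn : ∀ n, 0 ≤ b n := by intro n; rcases hb01 n with h | h <;> rw [h] <;> norm_num
  have hble : ∀ n, b n ≤ 1 := by intro n; rcases hb01 n with h | h <;> rw [h] <;> norm_num
  -- summability
  have hgeo : Summable (fun k : ℕ => (2 : ℝ)⁻¹ ^ (k + 1)) := by
    apply Summable.comp_injective (f := fun k : ℕ => (2 : ℝ)⁻¹ ^ k)
      (summable_geometric_of_lt_one (by norm_num) (by norm_num))
    exact fun a b h => by omega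
  have hsum : ∀ n : ℕ, Summable (fun k : ℕ => b (n + k) * (2 : ℝ)⁻¹ ^ (k + 1)) := by
    intro n
    apply Summable.of_nonneg_of_le (fun k => mul_nonneg (hbnn _) (by positivity)) _ hgeo
    intro k
    calc b (n + k) * (2 : ℝ)⁻¹ ^ (k + 1) ≤ 1 * (2 : ℝ)⁻¹ ^ (k + 1) := by
          apply mul_le_mul_of_nonneg_right (hble _) (by positivity)
    _ = (2 : ℝ)⁻¹ ^ (k + 1) := one_mul _
  have hgeosum : (∑' k : ℕ, (2 : ℝ)⁻¹ ^ (k + 1)) = 1 := by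
    have h1 : (∑' k : ℕ, (2 : ℝ)⁻¹ ^ k) = 2 := tsum_geometric_inv_two
    have h2 := Summable.tsum_eq_zero_add (f := fun k : ℕ => (2 : ℝ)⁻¹ ^ k)
      (summable_geometric_of_lt_one (by norm_num) (by norm_num))
    rw [h1] at h2
    simp only [pow_zero] at h2
    linarith
  -- the tails
  set T : ℕ → ℝ := fun n => ∑' k : ℕ, b (n + k) * (2 : ℝ)⁻¹ ^ (k + 1) with hT
  have hTrec : ∀ n, T n = b n * 2⁻¹ + T (n + 1) * 2⁻¹ := by
    intro n
    have h1 := Summable.tsum_eq_zero_add (f := fun k : ℕ => b (n + k) * (2 : ℝ)⁻¹ ^ (k + 1)) (hsum n)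
    have h2 : (∑' k : ℕ, b (n + (k + 1)) * (2 : ℝ)⁻¹ ^ (k + 1 + 1))
        = (∑' k : ℕ, (b (n + 1 + k) * (2 : ℝ)⁻¹ ^ (k + 1)) * 2⁻¹) := by
      apply tsum_congr
      intro k
      have : n + (k + 1) = n + 1 + k := by omega
      rw [this]
      ring
    rw [h2, tsum_mul_right] at h1
    simpa [hT] using h1
  have hTnn : ∀ n, 0 ≤ T n := by
    intro n
    apply tsum_nonneg
    intro k
    exact mul_nonneg (hbnn _) (by positivity)
  have hTlt : ∀ n, T n < 1 := by
    intro n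
    -- find an offset k₀ with b (n + k₀) = 0
    set j : ℕ := n + 1 with hj
    set k₀ : ℕ := 3 * (j * j) - (n + 1) with hk₀
    have hjj : n + 1 ≤ 3 * (j * j) := by nlinarith [hj ▸ (by omega : 1 ≤ j)]
    have hidx : n + k₀ + 1 = 3 * (j * j) := by omega
    have hbz : b (n + k₀) = 0 := by
      have := gneg j (by omega)
      simp only [hb]
      rw [hidx, this]
      norm_num
    -- compare with geometric series minus one term
    set c : ℕ → ℝ := fun k => (2 : ℝ)⁻¹ ^ (k + 1) - (if k = k₀ then (2 : ℝ)⁻¹ ^ (k₀ + 1) else 0)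
      with hc
    have hitesum : Summable (fun k : ℕ => if k = k₀ then (2 : ℝ)⁻¹ ^ (k₀ + 1) else 0) :=
      (hasSum_ite_eq k₀ _).summable
    have hcsum : Summable c := hgeo.sub hitesum
    have hcts : (∑' k, c k) = 1 - (2 : ℝ)⁻¹ ^ (k₀ + 1) := by
      rw [hc, Summable.tsum_sub hgeo hitesum, hgeosum, tsum_ite_eq]
    have hle : T n ≤ ∑' k, c k := by
      apply Summable.tsum_le_tsum _ (hsum n) hcsum
      intro k
      rcases eq_or_ne k k₀ with rfl | hne
      · simp [hc, hbz]
      · have h0 : (if k = k₀ then (2 : ℝ)⁻¹ ^ (k₀ + 1) else (0 : ℝ)) = 0 := if_neg hne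
        simp only [hc, h0, sub_zero]
        calc b (n + k) * (2 : ℝ)⁻¹ ^ (k + 1) ≤ 1 * (2 : ℝ)⁻¹ ^ (k + 1) :=
              mul_le_mul_of_nonneg_right (hble _) (by positivity)
        _ = (2 : ℝ)⁻¹ ^ (k + 1) := one_mul _
    have : (0 : ℝ) < (2 : ℝ)⁻¹ ^ (k₀ + 1) := by positivity
    calc T n ≤ 1 - (2 : ℝ)⁻¹ ^ (k₀ + 1) := by rw [← hcts]; exact hle
    _ < 1 := by linarith
  -- digits are determined by the tails
  have hdig : ∀ i j : ℕ, T i = T j → b i = b j := by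
    intro i j hij
    rcases hb01 i with h1 | h1 <;> rcases hb01 j with h2 | h2 <;> rw [h1, h2]
    · have ri := hTrec i; have rj := hTrec j
      rw [h1] at ri; rw [h2] at rj
      have := hTlt (i + 1); have := hTnn (j + 1)
      exfalso; rw [ri, rj] at hij; linarith
    · have ri := hTrec i; have rj := hTrec j
      rw [h1] at ri; rw [h2] at rj
      have := hTlt (j + 1); have := hTnn (i + 1)
      exfalso; rw [ri, rj] at hij; linarith
  -- key contradiction: equal tails at distinct indices are impossible
  have key : ∀ m n : ℕ, m < n → T m = T n → False := by
    intro m n hmn hTeq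
    have hPer : ∀ k, T (m + k) = T (n + k) ∧ b (m + k) = b (n + k) := by
      intro k
      induction k with
      | zero => exact ⟨by simpa using hTeq, by simpa using hdig m n hTeq⟩
      | succ k ih =>
        obtain ⟨hT', hb'⟩ := ih
        have rm := hTrec (m + k); have rn := hTrec (n + k)
        have hT2 : T (m + k + 1) = T (n + k + 1) := by
          rw [rm, rn, hb'] at hT'
          linarith
        have hT3 : T (m + (k + 1)) = T (n + (k + 1)) := by
          rwa [show m + (k + 1) = m + k + 1 from rfl, show n + (k + 1) = n + k + 1 from rfl]
        exact ⟨hT3, hdig _ _ hT3⟩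
    -- translate to g
    have gper : ∀ k, g (m + 1 + k) = g (n + 1 + k) := by
      intro k
      have := (hPer k).2
      simp only [hb] at this
      have h2 : ((g (m + k + 1) : ℝ)) = ((g (n + k + 1) : ℝ)) := by linarith
      have h3 : g (m + k + 1) = g (n + k + 1) := by exact_mod_cast h2
      rwa [show m + 1 + k = m + k + 1 from by omega, show n + 1 + k = n + k + 1 from by omega]
    set t : ℕ := n - m with ht
    have ht1 : 1 ≤ t := by omega
    have gper' : ∀ j, m + 1 ≤ j → g (j + t) = g j := by
      intro j hj
      have h1 := gper (j - (m + 1))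
      rw [show m + 1 + (j - (m + 1)) = j from by omega,
        show n + 1 + (j - (m + 1)) = j + t from by omega] at h1
      exact h1.symm
    -- g is eventually constant
    have gstep : ∀ j, m + 1 ≤ j → g (j + 1) = g j := by
      intro j hj
      have hjt : m + 1 ≤ j * t := le_trans hj (Nat.le_mul_of_pos_right j (by omega))
      have e1 : g (j * t + t) = g (j * t) := gper' (j * t) hjt
      have e2 : (j + 1) * t = j * t + t := by ring
      have e3 : g ((j + 1) * t) = g (j + 1) * g t := hgmul (j + 1) t (by omega) ht1
      have e4 : g (j * t) = g j * g t := hgmul j t (by omega) ht1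
      have e5 : g (j + 1) * g t = g j * g t := by rw [← e3, ← e4, e2, e1]
      rcases gpm t ht1 with h | h <;> rw [h] at e5 <;> omega
    have gconst : ∀ j, m + 1 ≤ j → g j = g (m + 1) := by
      intro j hj
      induction j with
      | zero => omega
      | succ j ih =>
        rcases Nat.lt_or_ge (m + 1) (j + 1) with h | h
        · have hj' : m + 1 ≤ j := by omega
          rw [gstep j hj', ih hj']
        · have : j + 1 = m + 1 := by omega
          rw [this]
    -- contradiction: squares give +1, 3·squares give −1
    set s : ℕ := m + 2 with hs
    have h1 : g (s * s) = 1 := gsq s (by omega)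
    have h2 : g (3 * (s * s)) = -1 := gneg s (by omega)
    have hss : m + 1 ≤ s * s := by nlinarith
    have hss3 : m + 1 ≤ 3 * (s * s) := by omega
    have c1 := gconst (s * s) hss
    have c2 := gconst (3 * (s * s)) hss3
    rw [h1] at c1; rw [h2] at c2
    omega
  -- conclude: if the sum were rational, the tails pigeonhole
  have hx : (∑' n : ℕ, ((1 + (g (n + 1) : ℝ)) / 2) * (2 : ℝ)⁻¹ ^ (n + 1)) = T 0 := by
    apply tsum_congr
    intro k
    simp [hT, hb]
  rw [hx]
  intro hrat
  obtain ⟨r, hr⟩ := hrat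
  have hD : (0 : ℝ) < (r.den : ℝ) := by exact_mod_cast r.pos
  -- each T n times den is an integer
  have hint : ∀ n : ℕ, ∃ a : ℤ, T n * (r.den : ℝ) = (a : ℝ) := by
    intro n
    induction n with
    | zero =>
      refine ⟨r.num, ?_⟩
      rw [← hr]
      rw [show ((r : ℝ)) = (r.num : ℝ) / (r.den : ℝ) by exact_mod_cast (Rat.num_div_den r).symm]
      field_simp
    | succ n ih =>
      obtain ⟨a, ha⟩ := ih
      have hrec := hTrec n
      have : T (n + 1) = 2 * T n - b n := by rw [hrec]; ring
      rcases hb01 n with h | h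
      · refine ⟨2 * a, ?_⟩
        rw [this, h]
        push_cast
        linarith
      · refine ⟨2 * a - r.den, ?_⟩
        rw [this, h]
        push_cast
        linarith
  choose f hf using hint
  have hbound : ∀ n, 0 ≤ f n ∧ f n < (r.den : ℤ) := by
    intro n
    constructor
    · have : (0 : ℝ) ≤ (f n : ℝ) := by
        rw [← hf n]
        exact mul_nonneg (hTnn n) (le_of_lt hD)
      exact_mod_cast this
    · have : (f n : ℝ) < (r.den : ℝ) := by
        rw [← hf n]
        nlinarith [hTlt n, hTnn n]
      exact_mod_cast this
  -- pigeonhole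
  have : ∃ i j : ℕ, i ≠ j ∧ f i = f j := by
    have hfin : Finite (Finset.Ico (0 : ℤ) (r.den : ℤ)) := inferInstance
    obtain ⟨i, j, hne, heq⟩ := Finite.exists_ne_map_eq_of_infinite
      (fun n : ℕ => (⟨f n, by
        rw [Finset.mem_Ico]; exact hbound n⟩ : Finset.Ico (0 : ℤ) (r.den : ℤ)))
    exact ⟨i, j, hne, by simpa [Subtype.ext_iff] using heq⟩
  obtain ⟨i, j, hne, heq⟩ := this
  have hTij : T i = T j := by
    have h1 := hf i
    have h2 := hf j
    rw [heq] at h1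
    have := h1.trans h2.symm
    exact mul_right_cancel₀ (ne_of_gt hD) this
  rcases hne.lt_or_gt with h | h
  · exact key i j h hTij
  · exact key j i h hTij.symm
end

section
/- The Gaussian Liouville sequence satisfies the recurrences g(1) = 1, g(2n) = g(n) for all n ≥ 1, and g(4k+1) = -g(4k+3) for all k ≥ 0. -/
/-- The Gaussian Liouville sequence satisfies `g 1 = 1`,
`g (2n) = g n` for `n ≥ 1`, and `g (4k+1) = -g (4k+3)` for `k ≥ 0`. -/
theorem stmt_3 (g : ℕ → ℤ)
    (hg1 : g 1 = 1)
    (hgmul : ∀ m n : ℕ, 1 ≤ m → 1 ≤ n → g (m * n) = g m * g n)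
    (hgp : ∀ p : ℕ, p.Prime → g p = if p % 4 = 3 then -1 else 1) :
    g 1 = 1 ∧ (∀ n : ℕ, 1 ≤ n → g (2 * n) = g n) ∧
      (∀ k : ℕ, g (4 * k + 1) = -g (4 * k + 3)) := by
  have key : ∀ n : ℕ, n % 2 = 1 → g n = if n % 4 = 3 then -1 else 1 := by
    intro n
    induction n using Nat.strong_induction_on with
    | _ n ih =>
      intro hodd
      rcases eq_or_ne n 1 with h1 | h1
      · rw [h1]; simpa using hg1
      · set p := n.minFac with hp
        have hpp : p.Prime := Nat.minFac_prime h1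
        have hdvd : p ∣ n := Nat.minFac_dvd n
        obtain ⟨m, hm⟩ := hdvd
        have hp1 : 1 < p := hpp.one_lt
        have hm0 : m ≠ 0 := by rintro rfl; omega
        have hmlt : m < n := by
          have h2 : 2 * m ≤ p * m := Nat.mul_le_mul_right m (by omega)
          omega
        have hpodd : p % 2 = 1 := by
          rcases Nat.even_or_odd p with he | ho
          · exfalso
            obtain ⟨k, hk⟩ := he
            have hnk : n = k * m + k * m := by rw [hm, hk]; ring
            omega
          · obtain ⟨k, hk⟩ := ho; omega
        have hmodd : m % 2 = 1 := by
          rcases Nat.even_or_odd m with he | ho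
          · exfalso
            obtain ⟨k, hk⟩ := he
            have hnk : n = p * k + p * k := by rw [hm, hk]; ring
            omega
          · obtain ⟨k, hk⟩ := ho; omega
        have hgm := ih m hmlt hmodd
        have hgp' := hgp p hpp
        have hmul := hgmul p m (by omega) (by omega)
        rw [← hm] at hmul
        have hmod : n % 4 = p % 4 * (m % 4) % 4 := by
          rw [hm, Nat.mul_mod]
        have hp4 : p % 4 = 1 ∨ p % 4 = 3 := by omega
        have hm4 : m % 4 = 1 ∨ m % 4 = 3 := by omega
        rcases hp4 with h4 | h4 <;> rcases hm4 with h5 | h5 <;>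
          simp [h4, h5] at hgp' hgm hmod ⊢ <;>
          simp [hmul, hgp', hgm, hmod]
  refine ⟨hg1, ?_, ?_⟩
  · intro n hn
    have h2 : g 2 = 1 := by simpa using hgp 2 Nat.prime_two
    rw [hgmul 2 n (by omega) hn, h2, one_mul]
  · intro k
    have h1 := key (4 * k + 1) (by omega)
    have h3 := key (4 * k + 3) (by omega)
    rw [show (4 * k + 1) % 4 = 1 by omega] at h1
    rw [show (4 * k + 3) % 4 = 3 by omega] at h3
    simp at h1 h3
    rw [h1, h3]; ring
end

section
/- For every complex z with |z| < 1, the generating function G(z) = Σ_{n=1}^∞ g(n) z^n of the Gaussian Liouville sequence satisfies the functional equation G(z²) = G(z) - z/(1 + z²). -/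
/-- For `|z| < 1`, `G(z²) = G(z) - z/(1+z²)`, where
`G(z) = Σ_{n≥1} g(n) zⁿ` and `g` is the Gaussian Liouville function. -/
theorem stmt_5 (g : ℕ → ℤ)
    (hg1 : g 1 = 1)
    (hgmul : ∀ m n : ℕ, 1 ≤ m → 1 ≤ n → g (m * n) = g m * g n)
    (hgp : ∀ p : ℕ, p.Prime → g p = if p % 4 = 3 then -1 else 1)
    (z : ℂ) (hz : ‖z‖ < 1) :
    (∑' n : ℕ, (g (n + 1) : ℂ) * (z ^ 2) ^ (n + 1))
      = (∑' n : ℕ, (g (n + 1) : ℂ) * z ^ (n + 1)) - z / (1 + z ^ 2) := by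
  -- g n = ±1 for n ≥ 1
  have habs : ∀ n : ℕ, 1 ≤ n → g n = 1 ∨ g n = -1 := by
    intro n
    induction n using Nat.strong_induction_on with
    | _ n ih =>
      intro hn
      rcases eq_or_lt_of_le hn with h1 | h2
      · left; rw [← h1]; exact hg1
      · obtain ⟨p, hp, hpd⟩ := Nat.exists_prime_and_dvd (by omega : n ≠ 1)
        obtain ⟨m, rfl⟩ := hpd
        have hm1 : 1 ≤ m := by
          rcases Nat.eq_zero_or_pos m with h | h
          · subst h; simp at h2
          · exact h
        have hmlt : m < p * m := by
          have := hp.two_le; nlinarith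
        have hgpv : g p = 1 ∨ g p = -1 := by
          rw [hgp p hp]; split_ifs <;> simp
        rw [hgmul p m hp.one_le hm1]
        rcases hgpv with h | h <;> rcases ih m hmlt hm1 with h' | h' <;>
          simp [h, h']
  -- value of g at odd numbers
  have hodd : ∀ n : ℕ, Odd n → g n = if n % 4 = 3 then -1 else 1 := by
    intro n
    induction n using Nat.strong_induction_on with
    | _ n ih =>
      intro hno
      have hn1 : 1 ≤ n := hno.pos
      rcases eq_or_lt_of_le hn1 with h1 | h2
      · rw [← h1, hg1]; norm_num
      · obtain ⟨p, hp, hpd⟩ := Nat.exists_prime_and_dvd (by omega : n ≠ 1)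
        obtain ⟨m, rfl⟩ := hpd
        have hpom : Odd p ∧ Odd m := Nat.odd_mul.mp hno
        have hm1 : 1 ≤ m := hpom.2.pos
        have hmlt : m < p * m := by
          have := hp.two_le; nlinarith
        rw [hgmul p m hp.one_le hm1, hgp p hp, ih m hmlt hpom.2]
        have hp4 : p % 4 = 1 ∨ p % 4 = 3 := by
          obtain ⟨k, hk⟩ := hpom.1; omega
        have hm4 : m % 4 = 1 ∨ m % 4 = 3 := by
          obtain ⟨k, hk⟩ := hpom.2; omega
        rcases hp4 with h | h <;> rcases hm4 with h' | h' <;>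
          rw [Nat.mul_mod, h, h'] <;> norm_num
  have hg2 : g 2 = 1 := by rw [hgp 2 Nat.prime_two]; norm_num
  -- the two series as functions supported on positive naturals
  set f : ℕ → ℂ := fun n => if n = 0 then 0 else (g n : ℂ) * z ^ n with hf
  set f2 : ℕ → ℂ := fun n => if n = 0 then 0 else (g n : ℂ) * (z ^ 2) ^ n with hf2
  have hz2 : ‖z ^ 2‖ < 1 := by
    rw [norm_pow]; nlinarith [norm_nonneg z]
  have hnorm : ∀ (w : ℂ) (n : ℕ),
      ‖(if n = 0 then 0 else (g n : ℂ) * w ^ n)‖ ≤ ‖w‖ ^ n := by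
    intro w n
    rcases Nat.eq_zero_or_pos n with h | h
    · subst h; simp
    · rw [if_neg (by omega)]
      have : ‖(g n : ℂ)‖ = 1 := by
        rcases habs n h with h' | h' <;> rw [h'] <;> simp
      rw [norm_mul, this, one_mul, norm_pow]
  have hsumf : Summable f :=
    Summable.of_norm_bounded (summable_geometric_of_lt_one (norm_nonneg z) hz)
      (hnorm z)
  have hsumf2 : Summable f2 :=
    Summable.of_norm_bounded (summable_geometric_of_lt_one (norm_nonneg _) hz2)
      (hnorm (z ^ 2))
  -- even part of f is f2
  have heven : ∀ k : ℕ, f (2 * k) = f2 k := by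
    intro k
    rcases Nat.eq_zero_or_pos k with h | h
    · subst h; simp [hf, hf2]
    · have : g (2 * k) = g k := by rw [hgmul 2 k (by norm_num) h, hg2, one_mul]
      simp only [hf, hf2, if_neg (by omega : 2 * k ≠ 0), if_neg (by omega : k ≠ 0),
        this, pow_mul]
  -- odd part of f is geometric
  have hgodd : ∀ k : ℕ, ((g (2 * k + 1) : ℤ) : ℂ) = (-1) ^ k := by
    intro k
    rw [hodd (2 * k + 1) ⟨k, by ring⟩]
    rcases Nat.even_or_odd k with ⟨j, rfl⟩ | ⟨j, rfl⟩
    · rw [if_neg (by omega)]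
      push_cast
      rw [Even.neg_one_pow ⟨j, rfl⟩]
    · rw [if_pos (by omega)]
      push_cast
      rw [Odd.neg_one_pow ⟨j, rfl⟩]
  have hoddval : ∀ k : ℕ, f (2 * k + 1) = z * (-(z ^ 2)) ^ k := by
    intro k
    simp only [hf, if_neg (by omega : 2 * k + 1 ≠ 0), hgodd k]
    rw [neg_pow, pow_add, pow_mul]
    ring
  have hsum_odd : Summable fun k => f (2 * k + 1) := by
    simp only [hoddval]
    exact (summable_geometric_of_norm_lt_one (by simpa using hz2)).mul_left z
  have hsum_even : Summable fun k => f (2 * k) := by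
    simp only [heven]; exact hsumf2
  have hsplit := tsum_even_add_odd hsum_even hsum_odd
  have hodd_sum : (∑' k, f (2 * k + 1)) = z / (1 + z ^ 2) := by
    simp only [hoddval]
    rw [tsum_mul_left, tsum_geometric_of_norm_lt_one (by simpa using hz2)]
    rw [div_eq_mul_inv]
    ring_nf
  have h1z2 : (1 : ℂ) + z ^ 2 ≠ 0 := by
    intro h
    have : ‖z ^ 2‖ = 1 := by
      have : z ^ 2 = -1 := by linear_combination h
      rw [this]; simp
    rw [this] at hz2; linarith
  -- shift lemmas
  have hL : (∑' n : ℕ, (g (n + 1) : ℂ) * (z ^ 2) ^ (n + 1)) = ∑' n, f2 n := by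
    rw [Summable.tsum_eq_zero_add hsumf2]
    simp [hf2]
  have hR : (∑' n : ℕ, (g (n + 1) : ℂ) * z ^ (n + 1)) = ∑' n, f n := by
    rw [Summable.tsum_eq_zero_add hsumf]
    simp [hf]
  rw [hL, hR]
  have heq : (∑' k, f (2 * k)) = ∑' n, f2 n := tsum_congr heven
  rw [heq, hodd_sum] at hsplit
  linear_combination hsplit
end

section
/- For every complex z with |z| < 1, Σ_{n=1}^∞ g(n) z^n = Σ_{k=0}^∞ z^(2^k) / (1 + z^(2^(k+1))), where g is the Gaussian Liouville function. -/
theorem aux_key : ∀ k j k' j' : ℕ, 2 ^ k * (2 * j + 1) = 2 ^ k' * (2 * j' + 1) → k ≤ k' → k = k' := by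
  intro k j k' j' h hle
  by_contra hne
  obtain ⟨d, rfl⟩ : ∃ d, k' = k + (d + 1) := ⟨k' - k - 1, by omega⟩
  rw [pow_add, mul_assoc] at h
  have h0 : 0 < (2:ℕ) ^ k := Nat.pow_pos (n := k) (by norm_num)
  have h1 : 2 * j + 1 = 2 ^ (d + 1) * (2 * j' + 1) := Nat.eq_of_mul_eq_mul_left h0 h
  obtain ⟨e, he⟩ : (2:ℕ) ∣ 2 ^ (d + 1) := dvd_pow_self 2 (Nat.succ_ne_zero d)
  rw [he, mul_assoc] at h1
  omega

theorem aux_bij : Function.Bijective (fun p : ℕ × ℕ => 2 ^ p.1 * (2 * p.2 + 1) - 1) := by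
  constructor
  · rintro ⟨k, j⟩ ⟨k', j'⟩ h
    simp only at h
    have h' : 2 ^ k * (2 * j + 1) = 2 ^ k' * (2 * j' + 1) := by
      have h1 : 1 ≤ 2 ^ k * (2 * j + 1) := Nat.one_le_iff_ne_zero.mpr (by positivity)
      have h2 : 1 ≤ 2 ^ k' * (2 * j' + 1) := Nat.one_le_iff_ne_zero.mpr (by positivity)
      omega
    have hk : k = k' := by
      rcases le_total k k' with hle | hle
      · exact aux_key k j k' j' h' hle
      · exact (aux_key k' j' k j h'.symm hle).symm
    subst hk
    have := Nat.eq_of_mul_eq_mul_left (Nat.pow_pos (n := k) (by norm_num) : 0 < (2:ℕ) ^ k) h'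
    exact Prod.ext_iff.mpr ⟨rfl, by omega⟩
  · intro n
    obtain ⟨k, m, hm, hn⟩ := Nat.exists_eq_two_pow_mul_odd (Nat.succ_ne_zero n)
    obtain ⟨j, rfl⟩ := hm
    exact ⟨(k, j), by simp only []; omega⟩


/-- For `|z| < 1`,
`Σ_{n≥1} g(n) zⁿ = Σ_{k≥0} z^(2^k)/(1 + z^(2^(k+1)))`. -/
theorem stmt_6 (g : ℕ → ℤ)
    (hg1 : g 1 = 1)
    (hgmul : ∀ m n : ℕ, 1 ≤ m → 1 ≤ n → g (m * n) = g m * g n)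
    (hgp : ∀ p : ℕ, p.Prime → g p = if p % 4 = 3 then -1 else 1)
    (z : ℂ) (hz : ‖z‖ < 1) :
    (∑' n : ℕ, (g (n + 1) : ℂ) * z ^ (n + 1))
      = ∑' k : ℕ, z ^ (2 ^ k) / (1 + z ^ (2 ^ (k + 1))) := by
  -- arithmetic facts about g
  have hg2 : g 2 = 1 := by have := hgp 2 Nat.prime_two; norm_num at this; exact this
  have hgpow2 : ∀ k : ℕ, g (2 ^ k) = 1 := by
    intro k
    induction k with
    | zero => simpa using hg1
    | succ k ih =>
      rw [pow_succ, hgmul _ 2 (Nat.one_le_two_pow) one_le_two, ih, hg2, mul_one]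
  have hodd : ∀ m, m % 2 = 1 → g m = if m % 4 = 1 then 1 else -1 := by
    intro m
    induction m using Nat.strong_induction_on with
    | _ m ih =>
      intro hm
      rcases eq_or_lt_of_le (Nat.one_le_iff_ne_zero.mpr (by omega : m ≠ 0)) with h1 | h1
      · simp [← h1, hg1]
      by_cases hp : m.Prime
      · rw [hgp m hp]
        have : m % 4 = 1 ∨ m % 4 = 3 := by omega
        rcases this with h | h <;> simp [h]
      · obtain ⟨p, hpp, hpd⟩ := Nat.exists_prime_and_dvd (by omega : m ≠ 1)
        obtain ⟨q, rfl⟩ := hpd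
        have hoddpq : Odd p ∧ Odd q := by
          rw [← Nat.odd_mul, Nat.odd_iff]; exact hm
        have hq1 : 1 ≤ q := hoddpq.2.pos
        have hpm : p % 2 = 1 := Nat.odd_iff.mp hoddpq.1
        have hqm : q % 2 = 1 := Nat.odd_iff.mp hoddpq.2
        have hplt : 1 < p := hpp.one_lt
        have hqlt : q < p * q := by nlinarith
        rw [hgmul p q (by omega) hq1, hgp p hpp, ih q hqlt hqm]
        have hmod := Nat.mul_mod p q 4
        have hp4 : p % 4 = 1 ∨ p % 4 = 3 := by omega
        have hq4 : q % 4 = 1 ∨ q % 4 = 3 := by omega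
        rcases hp4 with h | h <;> rcases hq4 with h' | h' <;>
          simp [h, h'] at hmod ⊢ <;> simp [hmod]
  have hgood : ∀ k j : ℕ, g (2 ^ k * (2 * j + 1)) = (-1) ^ j := by
    intro k j
    rw [hgmul _ _ Nat.one_le_two_pow (by omega), hgpow2, one_mul,
      hodd (2 * j + 1) (by omega)]
    rcases Nat.even_or_odd j with hj | hj
    · obtain ⟨c, rfl⟩ := hj
      have : (2 * (c + c) + 1) % 4 = 1 := by omega
      rw [this]
      simp only [if_pos rfl]
      exact (Even.neg_one_pow ⟨c, rfl⟩).symm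
    · obtain ⟨c, rfl⟩ := hj
      have : (2 * (2 * c + 1) + 1) % 4 = 3 := by omega
      rw [this]; simp [pow_add, pow_mul]
  -- summability
  set f : ℕ → ℂ := fun n => (g (n + 1) : ℂ) * z ^ (n + 1) with hf
  have habs : ∀ n : ℕ, ‖(g (n + 1) : ℂ)‖ = 1 := by
    intro n
    obtain ⟨⟨k, j⟩, hkj⟩ := aux_bij.2 n
    simp only at hkj
    have h1 : 1 ≤ 2 ^ k * (2 * j + 1) := Nat.one_le_iff_ne_zero.mpr (by positivity)
    have : n + 1 = 2 ^ k * (2 * j + 1) := by omega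
    rw [this, hgood k j]
    push_cast
    simp
  have hsum : Summable f := by
    apply Summable.of_norm_bounded (g := fun n => ‖z‖ ^ (n + 1))
    · have := (summable_geometric_of_lt_one (norm_nonneg z) hz).mul_left ‖z‖
      refine this.congr fun n => ?_
      rw [pow_succ]; ring
    · intro n
      rw [hf]
      simp only [norm_mul, habs n, one_mul, norm_pow]
      exact le_refl _
  -- reindex
  set e : ℕ × ℕ ≃ ℕ := Equiv.ofBijective _ aux_bij with he
  set F : ℕ × ℕ → ℂ := fun p => (-1 : ℂ) ^ p.2 * z ^ (2 ^ p.1 * (2 * p.2 + 1)) with hF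
  have hfe : ∀ p : ℕ × ℕ, f (e p) = F p := by
    rintro ⟨k, j⟩
    have h1 : 1 ≤ 2 ^ k * (2 * j + 1) := Nat.one_le_iff_ne_zero.mpr (by positivity)
    have he1 : e (k, j) + 1 = 2 ^ k * (2 * j + 1) := by
      show 2 ^ k * (2 * j + 1) - 1 + 1 = _
      omega
    simp only [hf, hF, he1, hgood k j]
    push_cast
    ring
  have hFsum : Summable F := by
    have : Summable (f ∘ e) := e.summable_iff.mpr hsum
    exact this.congr hfe
  have step1 : (∑' n : ℕ, f n) = ∑' p : ℕ × ℕ, F p := by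
    rw [← e.tsum_eq f]
    exact tsum_congr hfe
  have step2 : (∑' p : ℕ × ℕ, F p) = ∑' (k : ℕ) (j : ℕ), F (k, j) := Summable.tsum_prod hFsum
  have step3 : ∀ k : ℕ, (∑' j : ℕ, F (k, j)) = z ^ (2 ^ k) / (1 + z ^ (2 ^ (k + 1))) := by
    intro k
    have hr : ‖-(z ^ (2 ^ (k + 1)))‖ < 1 := by
      rw [norm_neg, norm_pow]
      exact pow_lt_one₀ (norm_nonneg z) hz (by positivity)
    have hterm : ∀ j : ℕ, F (k, j) = z ^ (2 ^ k) * (-(z ^ (2 ^ (k + 1)))) ^ j := by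
      intro j
      simp only [hF]
      rw [show 2 ^ k * (2 * j + 1) = 2 ^ (k + 1) * j + 2 ^ k by ring, pow_add, pow_mul,
        neg_pow (z ^ 2 ^ (k + 1))]
      ring
    calc (∑' j : ℕ, F (k, j)) = ∑' j : ℕ, z ^ (2 ^ k) * (-(z ^ (2 ^ (k + 1)))) ^ j :=
          tsum_congr hterm
      _ = z ^ (2 ^ k) * (1 - -(z ^ (2 ^ (k + 1))))⁻¹ := by
          rw [tsum_mul_left, tsum_geometric_of_norm_lt_one hr]
      _ = z ^ (2 ^ k) / (1 + z ^ (2 ^ (k + 1))) := by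
          rw [sub_neg_eq_add, div_eq_mul_inv]
  rw [step1, step2]
  exact tsum_congr step3
end

section
/- The formal power series (equivalently, holomorphic function on the open unit disk) G(z) = Σ_{n=1}^∞ g(n) z^n is transcendental over the field of rational functions ℂ(z); i.e., there is no nonzero polynomial P(z, y) ∈ ℂ[z, y] with P(z, G(z)) = 0 for all |z| < 1. -/
open Filter Finset Topology

set_option maxHeartbeats 1000000

lemma g_odd_formula (g : ℕ → ℤ) (hg1 : g 1 = 1)
    (hgmul : ∀ m n : ℕ, 1 ≤ m → 1 ≤ n → g (m * n) = g m * g n)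
    (hgp : ∀ p : ℕ, p.Prime → g p = if p % 4 = 3 then -1 else 1) :
    ∀ m : ℕ, m % 2 = 1 → g m = if m % 4 = 3 then -1 else 1 := by
  intro m
  induction m using Nat.strong_induction_on with
  | _ m ih =>
    intro hm
    rcases eq_or_lt_of_le (show 1 ≤ m by omega) with h1 | h2
    · rw [← h1, hg1]; norm_num
    by_cases hp : m.Prime
    · exact hgp m hp
    · obtain ⟨a, ha, ha2, halt⟩ := Nat.exists_dvd_of_not_prime2 h2 hp
      obtain ⟨b, hb⟩ := ha
      have hab2 : (a * b) % 2 = 1 := by rw [← hb]; exact hm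
      have hmod2 : a % 2 = 1 ∧ b % 2 = 1 := by
        rw [Nat.mul_mod] at hab2
        rcases Nat.mod_two_eq_zero_or_one a with h | h <;>
          rcases Nat.mod_two_eq_zero_or_one b with h' | h' <;> simp [h, h'] at hab2 ⊢
      have hb2 : 2 ≤ b := by
        rcases Nat.lt_or_ge b 2 with h | h
        · interval_cases b <;> omega
        · exact h
      have hblt : b < m := by
        have : 2 * b ≤ a * b := Nat.mul_le_mul_right b ha2
        omega
      have hga := ih a halt hmod2.1
      have hgb := ih b hblt hmod2.2
      rw [hb, hgmul a b (by omega) (by omega), hga, hgb]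
      have hmm : (a * b) % 4 = (a % 4) * (b % 4) % 4 := by rw [Nat.mul_mod]
      have ha4 : a % 4 = 1 ∨ a % 4 = 3 := by omega
      have hb4 : b % 4 = 1 ∨ b % 4 = 3 := by omega
      rcases ha4 with h | h <;> rcases hb4 with h' | h' <;>
        rw [h, h'] at hmm <;> simp [hmm, h, h']

lemma g_two_pow_mul (g : ℕ → ℤ)
    (hgmul : ∀ m n : ℕ, 1 ≤ m → 1 ≤ n → g (m * n) = g m * g n)
    (hgp : ∀ p : ℕ, p.Prime → g p = if p % 4 = 3 then -1 else 1)
    (k m : ℕ) (hm : 1 ≤ m) : g (2 ^ k * m) = g m := by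
  induction k with
  | zero => simp
  | succ k ih =>
    have h2 : g 2 = 1 := by rw [hgp 2 Nat.prime_two]; norm_num
    have : (2:ℕ) ^ (k+1) * m = 2 * (2 ^ k * m) := by ring
    rw [this, hgmul 2 (2^k*m) (by omega) (by exact Nat.one_le_iff_ne_zero.2 (by positivity)), h2, ih]
    ring

lemma g_val (g : ℕ → ℤ) (hg1 : g 1 = 1)
    (hgmul : ∀ m n : ℕ, 1 ≤ m → 1 ≤ n → g (m * n) = g m * g n)
    (hgp : ∀ p : ℕ, p.Prime → g p = if p % 4 = 3 then -1 else 1)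
    (k j : ℕ) : ((g (2 ^ k * (2 * j + 1)) : ℤ) : ℂ) = (-1) ^ j := by
  rw [g_two_pow_mul g hgmul hgp k (2*j+1) (by omega),
    g_odd_formula g hg1 hgmul hgp (2*j+1) (by omega)]
  rcases Nat.even_or_odd j with hj | hj
  · obtain ⟨t, rfl⟩ := hj
    rw [if_neg (by omega), (Even.add_self t).neg_one_pow]
    norm_num
  · obtain ⟨t, rfl⟩ := hj
    rw [if_pos (by omega), (odd_two_mul_add_one t).neg_one_pow]
    norm_num

lemma epair_inj : Function.Injective (fun p : ℕ × ℕ => 2 ^ p.1 * (2 * p.2 + 1)) := by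
  have key : ∀ k k' j j' : ℕ, 2 ^ k * (2 * j + 1) = 2 ^ k' * (2 * j' + 1) → k = k' ∧ j = j' := by
    intro k
    induction k with
    | zero =>
      intro k' j j' h
      cases k' with
      | zero => simp at h; omega
      | succ k' =>
        exfalso
        have : (2:ℕ) ^ (k'+1) * (2 * j' + 1) = 2 * (2 ^ k' * (2 * j' + 1)) := by ring
        rw [this] at h
        omega
    | succ k ih =>
      intro k' j j' h
      cases k' with
      | zero =>
        exfalso
        have : (2:ℕ) ^ (k+1) * (2 * j + 1) = 2 * (2 ^ k * (2 * j + 1)) := by ring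
        rw [this] at h
        omega
      | succ k' =>
        have h1 : (2:ℕ) ^ (k+1) * (2 * j + 1) = 2 * (2 ^ k * (2 * j + 1)) := by ring
        have h2 : (2:ℕ) ^ (k'+1) * (2 * j' + 1) = 2 * (2 ^ k' * (2 * j' + 1)) := by ring
        rw [h1, h2] at h
        have := ih k' j j' (by omega)
        omega
  intro p q h
  simp only at h
  have := key p.1 q.1 p.2 q.2 h
  exact Prod.ext this.1 this.2

lemma epair_surj : ∀ n : ℕ, 1 ≤ n → ∃ p : ℕ × ℕ, 2 ^ p.1 * (2 * p.2 + 1) = n := by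
  intro n hn
  obtain ⟨k, m, hm, rfl⟩ := Nat.exists_eq_pow_mul_and_not_dvd (show n ≠ 0 by omega) 2 (by norm_num)
  have : m % 2 = 1 := by omega
  refine ⟨(k, m / 2), ?_⟩
  simp only
  congr 1
  omega

lemma geom_piece {w : ℂ} (hw : ‖w‖ < 1) :
    HasSum (fun j : ℕ => (-1 : ℂ) ^ j * w ^ (2 * j + 1)) (w / (1 + w ^ 2)) := by
  have h2 : ‖-(w ^ 2)‖ < 1 := by
    rw [norm_neg, norm_pow]
    nlinarith [norm_nonneg w]
  have H := (hasSum_geometric_of_norm_lt_one h2).mul_left w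
  have heq : (fun j : ℕ => w * (-(w ^ 2)) ^ j) = fun j : ℕ => (-1 : ℂ) ^ j * w ^ (2 * j + 1) := by
    funext j
    rw [neg_pow, pow_add, pow_mul]
    ring
  rw [heq] at H
  have hval : w * (1 - -(w ^ 2))⁻¹ = w / (1 + w ^ 2) := by
    rw [sub_neg_eq_add, div_eq_mul_inv]
  rwa [hval] at H

lemma G_hasSum (g : ℕ → ℤ) (hg1 : g 1 = 1)
    (hgmul : ∀ m n : ℕ, 1 ≤ m → 1 ≤ n → g (m * n) = g m * g n)
    (hgp : ∀ p : ℕ, p.Prime → g p = if p % 4 = 3 then -1 else 1)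
    (z : ℂ) (hz : ‖z‖ < 1) :
    HasSum (fun k : ℕ => z ^ (2 ^ k) / (1 + z ^ (2 ^ (k + 1))))
      (∑' n : ℕ, (g (n + 1) : ℂ) * z ^ (n + 1)) := by
  set a : ℕ → ℂ := fun n => (g (n + 1) : ℂ) * z ^ (n + 1) with ha_def
  set F : ℕ × ℕ → ℂ := fun p => (-1 : ℂ) ^ p.2 * z ^ (2 ^ p.1 * (2 * p.2 + 1)) with hF_def
  have hpos : ∀ p : ℕ × ℕ, 1 ≤ 2 ^ p.1 * (2 * p.2 + 1) := by
    intro p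
    have : (0:ℕ) < 2 ^ p.1 * (2 * p.2 + 1) := by positivity
    omega
  have hebij : Function.Bijective (fun p : ℕ × ℕ => 2 ^ p.1 * (2 * p.2 + 1) - 1) := by
    constructor
    · intro p q h
      apply epair_inj
      have hp := hpos p; have hq := hpos q
      simp only at h ⊢
      omega
    · intro n
      obtain ⟨p, hp⟩ := epair_surj (n + 1) (by omega)
      refine ⟨p, ?_⟩
      have := hpos p
      simp only
      omega
  set e : ℕ × ℕ ≃ ℕ := Equiv.ofBijective _ hebij with he_def
  have hFa : a ∘ e = F := by
    funext p
    have h1 : (e p : ℕ) + 1 = 2 ^ p.1 * (2 * p.2 + 1) := by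
      have := hpos p
      simp only [he_def, Equiv.ofBijective_apply]
      omega
    simp only [Function.comp_apply, ha_def, hF_def, h1]
    rw [g_val g hg1 hgmul hgp]
  have hsumF : Summable F := by
    apply Summable.of_norm
    have : (fun p => ‖F p‖) =
        (fun n => ‖z‖ ^ n) ∘ (fun p : ℕ × ℕ => 2 ^ p.1 * (2 * p.2 + 1)) := by
      funext p
      simp [hF_def, norm_mul, norm_pow]
    rw [this]
    exact (summable_geometric_of_lt_one (norm_nonneg z) hz).comp_injective epair_inj
  have hsuma : Summable a := by
    rw [← e.summable_iff, hFa]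
    exact hsumF
  have hFS : HasSum F (∑' n : ℕ, a n) := by
    rw [← hFa]
    exact e.hasSum_iff.2 hsuma.hasSum
  apply hFS.prod_fiberwise
  intro k
  have hw : ‖z ^ 2 ^ k‖ < 1 := by
    rw [norm_pow]
    exact pow_lt_one₀ (norm_nonneg z) hz (by positivity)
  have H := geom_piece hw
  have h1 : (fun j : ℕ => (-1 : ℂ) ^ j * (z ^ 2 ^ k) ^ (2 * j + 1)) = fun j => F (k, j) := by
    funext j
    rw [← pow_mul]
  have h2 : z ^ 2 ^ k / (1 + (z ^ 2 ^ k) ^ 2) = z ^ 2 ^ k / (1 + z ^ 2 ^ (k + 1)) := by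
    rw [← pow_mul]
    norm_num [pow_succ]
  rw [h1, h2] at H
  exact H

lemma root_bound {d : ℕ} (hd : 1 ≤ d) (c : ℕ → ℂ) (y : ℂ)
    (h : ∑ i ∈ Finset.range (d + 1), c i * y ^ i = 0) (hcd : c d ≠ 0) :
    ‖y‖ ≤ max 1 ((∑ i ∈ Finset.range d, ‖c i‖) / ‖c d‖) := by
  rcases le_or_gt ‖y‖ 1 with hy | hy
  · exact le_max_of_le_left hy
  refine le_max_of_le_right ?_
  rw [Finset.sum_range_succ] at h
  have heq : c d * y ^ d = -∑ i ∈ Finset.range d, c i * y ^ i := by linear_combination h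
  have h1 : ‖c d‖ * ‖y‖ ^ d ≤ (∑ i ∈ Finset.range d, ‖c i‖) * ‖y‖ ^ (d - 1) := by
    calc ‖c d‖ * ‖y‖ ^ d = ‖c d * y ^ d‖ := by rw [norm_mul, norm_pow]
      _ = ‖∑ i ∈ Finset.range d, c i * y ^ i‖ := by rw [heq, norm_neg]
      _ ≤ ∑ i ∈ Finset.range d, ‖c i * y ^ i‖ := norm_sum_le _ _
      _ ≤ ∑ i ∈ Finset.range d, ‖c i‖ * ‖y‖ ^ (d - 1) := by
          apply Finset.sum_le_sum
          intro i hi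
          rw [norm_mul, norm_pow]
          refine mul_le_mul_of_nonneg_left ?_ (norm_nonneg _)
          exact pow_le_pow_right₀ (le_of_lt hy) (by simp at hi; omega)
      _ = (∑ i ∈ Finset.range d, ‖c i‖) * ‖y‖ ^ (d - 1) := by rw [← Finset.sum_mul]
  have hA : 0 < ‖c d‖ := norm_pos_iff.2 hcd
  have hp : (0:ℝ) < ‖y‖ ^ (d - 1) := by positivity
  rw [le_div_iff₀ hA]
  have hd' : ‖y‖ ^ d = ‖y‖ ^ (d - 1) * ‖y‖ := by
    rw [← pow_succ]
    congr 1
    omega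
  rw [hd'] at h1
  nlinarith [h1, hp]

lemma real_pow_eq_one {a : ℝ} (ha : 0 ≤ a) {n : ℕ} (hn : n ≠ 0) (h : a ^ n = 1) : a = 1 := by
  rcases lt_trichotomy a 1 with h1 | h1 | h1
  · have := pow_lt_one₀ ha h1 hn
    linarith
  · exact h1
  · have := one_lt_pow₀ h1 hn
    linarith

lemma exists_zeta (q : Polynomial ℂ) (hq : q ≠ 0) (K : ℕ) (hK : q.natDegree < 2 ^ (K + 1)) :
    ∃ ζ : ℂ, ζ ^ (2 ^ (K + 1)) = -1 ∧ ‖ζ‖ = 1 ∧ q.eval ζ ≠ 0 := by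
  set n := 2 ^ (K + 2) with hn
  have hn0 : 0 < n := by positivity
  have hcard : (primitiveRoots n ℂ).card = 2 ^ (K + 1) := by
    rw [Complex.card_primitiveRoots, hn, Nat.totient_prime_pow Nat.prime_two (by omega)]
    norm_num
  have hprop : ∀ ζ ∈ primitiveRoots n ℂ, ζ ^ (2 ^ (K + 1)) = -1 ∧ ‖ζ‖ = 1 := by
    intro ζ hζ
    have hprim : IsPrimitiveRoot ζ n := (mem_primitiveRoots hn0).1 hζ
    have hpow : ζ ^ n = 1 := hprim.pow_eq_one
    constructor
    · set x := ζ ^ (2 ^ (K + 1)) with hx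
      have hx2 : x ^ 2 = 1 := by
        rw [hx, ← pow_mul, ← pow_succ, ← hn]
        exact hpow
      have hx1 : x ≠ 1 := by
        intro hx1
        have := hprim.dvd_of_pow_eq_one _ hx1
        have h2 : 2 ^ (K + 1) < n := by rw [hn]; exact Nat.pow_lt_pow_right (by norm_num) (by omega)
        have := Nat.le_of_dvd (by positivity) this
        omega
      have hfact : (x - 1) * (x + 1) = 0 := by linear_combination hx2
      rcases mul_eq_zero.1 hfact with h | h
      · exact absurd (by linear_combination h) hx1
      · linear_combination h
    · have : ‖ζ‖ ^ n = 1 := by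
        rw [← norm_pow, hpow, norm_one]
      exact real_pow_eq_one (norm_nonneg ζ) (by omega) this
  by_contra hcon
  push_neg at hcon
  have hsub : primitiveRoots n ℂ ⊆ q.roots.toFinset := by
    intro ζ hζ
    rw [Multiset.mem_toFinset, Polynomial.mem_roots']
    obtain ⟨h1, h2⟩ := hprop ζ hζ
    exact ⟨hq, hcon ζ h1 h2⟩
  have := Finset.card_le_card hsub
  have h2 := Multiset.toFinset_card_le q.roots
  have h3 := Polynomial.card_roots' q
  omega

lemma zeta_tail_real {ζ : ℂ} {K : ℕ} (hζ : ζ ^ (2 ^ (K + 1)) = -1) :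
    ∀ k, K + 1 ≤ k → ∃ x : ℝ, ζ ^ (2 ^ k) = (x : ℂ) := by
  intro k hk
  induction k with
  | zero => omega
  | succ k ih =>
    rcases eq_or_lt_of_le hk with h | h
    · exact ⟨-1, by rw [← h, hζ]; norm_num⟩
    · obtain ⟨x, hx⟩ := ih (by omega)
      refine ⟨x ^ 2, ?_⟩
      rw [pow_succ, pow_mul, hx]
      push_cast
      ring

lemma zeta_mid_im {ζ : ℂ} {K : ℕ} (hζ : ζ ^ (2 ^ (K + 1)) = -1) :
    ∀ k, k < K → (ζ ^ (2 ^ (k + 1))).im ≠ 0 := by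
  intro k hk h0
  set x := ζ ^ (2 ^ (k + 1)) with hxdef
  have hx : x ^ (2 ^ (K - k)) = -1 := by
    rw [hxdef, ← pow_mul, ← pow_add]
    rw [show k + 1 + (K - k) = K + 1 by omega]
    exact hζ
  have hxr : x = (x.re : ℂ) := Complex.ext (by simp) (by simp [h0])
  rw [hxr] at hx
  have h2 : (x.re : ℝ) ^ (2 ^ (K - k)) = -1 := by
    have : ((x.re ^ (2 ^ (K - k)) : ℝ) : ℂ) = ((-1 : ℝ) : ℂ) := by push_cast; exact_mod_cast hx
    exact_mod_cast this
  obtain ⟨m, hm⟩ : ∃ m, K - k = m + 1 := ⟨K - k - 1, by omega⟩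
  rw [hm] at h2
  have heven : Even (2 ^ (m + 1)) := by
    rw [pow_succ]
    exact (even_two).mul_left _
  have := heven.pow_nonneg (x.re)
  rw [h2] at this
  linarith

lemma zeta_K_im {ζ : ℂ} {K : ℕ} (hζ : ζ ^ (2 ^ (K + 1)) = -1) :
    |(ζ ^ (2 ^ K)).im| = 1 := by
  set x := ζ ^ (2 ^ K) with hxdef
  have hx2 : x ^ 2 = -1 := by
    rw [hxdef, ← pow_mul, ← pow_succ]
    exact hζ
  have hfact : (x - Complex.I) * (x + Complex.I) = 0 := by
    linear_combination hx2 - Complex.I_sq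
  rcases mul_eq_zero.1 hfact with h | h
  · have : x = Complex.I := by linear_combination h
    rw [this]
    simp
  · have : x = -Complex.I := by linear_combination h
    rw [this]
    simp

lemma ofReal_mul_im' (a : ℝ) (w : ℂ) : ((a : ℂ) * w).im = a * w.im := by
  simp [Complex.mul_im]

/-- `G(z) = Σ_{n≥1} g(n) zⁿ` is transcendental over `ℂ(z)`: no
nonzero `P(z,y) ∈ ℂ[z][y]` satisfies `P(z, G(z)) = 0` for all `|z| < 1`. -/
theorem stmt_8 (g : ℕ → ℤ)
    (hg1 : g 1 = 1)
    (hgmul : ∀ m n : ℕ, 1 ≤ m → 1 ≤ n → g (m * n) = g m * g n)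
    (hgp : ∀ p : ℕ, p.Prime → g p = if p % 4 = 3 then -1 else 1) :
    ¬ ∃ P : Polynomial (Polynomial ℂ), P ≠ 0 ∧
      ∀ z : ℂ, ‖z‖ < 1 →
        Polynomial.eval₂ (Polynomial.evalRingHom z)
          (∑' n : ℕ, (g (n + 1) : ℂ) * z ^ (n + 1)) P = 0 := by
  rintro ⟨P, hP0, hPz⟩
  by_cases hd0 : P.natDegree = 0
  · -- constant case: the coefficient polynomial vanishes on the unit ball, hence is zero
    have hc : P.coeff 0 ≠ 0 := by
      intro h
      exact hP0 (by rw [Polynomial.eq_C_of_natDegree_eq_zero hd0, h, map_zero])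
    apply hc
    apply Polynomial.eq_zero_of_infinite_isRoot
    apply Set.infinite_of_injective_forall_mem
      (f := fun n : ℕ => ((((n : ℝ) + 2)⁻¹ : ℝ) : ℂ))
    · intro a b hab
      dsimp only at hab
      have h1 : ((a : ℝ) + 2)⁻¹ = ((b : ℝ) + 2)⁻¹ := by exact_mod_cast hab
      have h2 : ((a : ℝ) + 2) = ((b : ℝ) + 2) := inv_inj.1 h1
      have h3 : (a : ℝ) = (b : ℝ) := by linarith
      exact_mod_cast h3
    · intro n
      have hpos : (0 : ℝ) < (n : ℝ) + 2 := by positivity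
      have hz : ‖((((n : ℝ) + 2)⁻¹ : ℝ) : ℂ)‖ < 1 := by
        rw [Complex.norm_real, Real.norm_eq_abs, abs_of_pos (by positivity)]
        rw [inv_lt_one_iff₀]
        right
        linarith
      have h := hPz _ hz
      rw [Polynomial.eq_C_of_natDegree_eq_zero hd0, Polynomial.eval₂_C] at h
      simpa using h
  · -- nonconstant case
    set d := P.natDegree with hd
    have hd1 : 1 ≤ d := by omega
    set q := P.coeff d with hqdef
    have hq0 : q ≠ 0 := Polynomial.leadingCoeff_ne_zero.2 hP0
    set K := q.natDegree with hKdef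
    obtain ⟨ζ, hζpow, hζnorm, hζq⟩ := exists_zeta q hq0 K
      (lt_of_lt_of_le (Nat.lt_two_pow_self (n := K)) (Nat.pow_le_pow_right (by norm_num) (by omega)))
    clear_value d q K
    subst hqdef
    set l := nhdsWithin (1 : ℝ) (Set.Iio 1) with hl
    haveI hlne : l.NeBot := by rw [hl]; infer_instance
    clear_value l
    set C : ℝ := ∑ k ∈ Finset.range K, 2 / |(ζ ^ (2 ^ (k + 1))).im| with hCdef
    have hC0 : 0 ≤ C := Finset.sum_nonneg fun k _ => by positivity
    clear_value C
    have hev_mem : ∀ᶠ r in l, 0 < r ∧ r < 1 := by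
      rw [hl]
      have h1 : ∀ᶠ r in nhdsWithin (1:ℝ) (Set.Iio 1), r < 1 :=
        eventually_mem_nhdsWithin.mono fun r hr => hr
      have h2 : ∀ᶠ r in nhdsWithin (1:ℝ) (Set.Iio 1), 0 < r :=
        (eventually_gt_nhds (by norm_num : (0 : ℝ) < 1)).filter_mono nhdsWithin_le_nhds
      exact h2.and h1
    have hev_half : ∀ᶠ r in l, 2⁻¹ ≤ r ^ (2 ^ K) := by
      have ht : Filter.Tendsto (fun r : ℝ => r ^ (2 ^ K)) l (𝓝 1) := by
        have h := (continuous_pow (2 ^ K)).tendsto (1 : ℝ)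
        rw [one_pow] at h
        rw [hl]
        exact h.mono_left nhdsWithin_le_nhds
      exact ht.eventually (eventually_ge_nhds (by norm_num))
    have hznorm : ∀ r : ℝ, 0 < r → r < 1 → ‖(r : ℂ) * ζ‖ = r := by
      intro r h0 h1
      rw [norm_mul, hζnorm, mul_one, Complex.norm_real, Real.norm_eq_abs, abs_of_pos h0]
    -- E1 : lower bound
    have E1 : ∀ᶠ r : ℝ in l, 2⁻¹ * (1 - r ^ (2 ^ (K + 1)))⁻¹ - C
        ≤ ‖∑' n : ℕ, (g (n + 1) : ℂ) * ((r : ℂ) * ζ) ^ (n + 1)‖ := by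
      filter_upwards [hev_mem, hev_half] with r hr hhalf
      obtain ⟨hr0, hr1⟩ := hr
      set z : ℂ := (r : ℂ) * ζ with hzdef
      have hz : ‖z‖ < 1 := by rw [hzdef, hznorm r hr0 hr1]; exact hr1
      set S : ℂ := ∑' n : ℕ, (g (n + 1) : ℂ) * z ^ (n + 1) with hSdef
      have hT := G_hasSum g hg1 hgmul hgp z hz
      set R : ℕ → ℝ := fun k => (z ^ (2 ^ k) / (1 + z ^ (2 ^ (k + 1)))).im with hRdef
      have hR : HasSum R S.im := ((Complex.hasSum_iff _ _).1 hT).2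
      have hzp : ∀ k : ℕ, z ^ (2 ^ k) = ((r ^ (2 ^ k) : ℝ) : ℂ) * ζ ^ (2 ^ k) := by
        intro k
        rw [hzdef, mul_pow, Complex.ofReal_pow]
      have hrpow1 : r ^ (2 ^ (K + 1)) < 1 :=
        pow_lt_one₀ (le_of_lt hr0) hr1 (by positivity)
      have hrpos : ∀ m : ℕ, 0 < r ^ m := fun m => pow_pos hr0 m
      have hdpos : (0 : ℝ) < 1 - r ^ (2 ^ (K + 1)) := by linarith
      have hden : 1 + z ^ (2 ^ (K + 1)) = ((1 - r ^ (2 ^ (K + 1)) : ℝ) : ℂ) := by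
        rw [hzp, hζpow]
        push_cast
        ring
      have hTK : R K = (r ^ (2 ^ K) / (1 - r ^ (2 ^ (K + 1)))) * (ζ ^ (2 ^ K)).im := by
        rw [hRdef]
        simp only
        rw [hden, hzp K]
        rw [show ((r ^ 2 ^ K : ℝ) : ℂ) * ζ ^ 2 ^ K / ((1 - r ^ 2 ^ (K + 1) : ℝ) : ℂ)
            = (((r ^ 2 ^ K / (1 - r ^ 2 ^ (K + 1)) : ℝ)) : ℂ) * ζ ^ 2 ^ K by
          push_cast; ring]
        rw [ofReal_mul_im']
      have hmain : 2⁻¹ * (1 - r ^ (2 ^ (K + 1)))⁻¹ ≤ |R K| := by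
        rw [hTK, abs_mul, zeta_K_im hζpow, mul_one,
          abs_of_pos (div_pos (hrpos _) hdpos), div_eq_mul_inv]
        exact mul_le_mul_of_nonneg_right hhalf (le_of_lt (inv_pos.2 hdpos))
      have htail : ∀ k : ℕ, K + 1 ≤ k → R k = 0 := by
        intro k hk
        obtain ⟨x, hx⟩ := zeta_tail_real hζpow k hk
        obtain ⟨y, hy⟩ := zeta_tail_real hζpow (k + 1) (by omega)
        rw [hRdef]
        simp only
        rw [hzp k, hzp (k + 1), hx, hy]
        rw [show ((r ^ 2 ^ k : ℝ) : ℂ) * (x : ℂ) / (1 + ((r ^ 2 ^ (k + 1) : ℝ) : ℂ) * (y : ℂ))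
            = (((r ^ 2 ^ k * x / (1 + r ^ 2 ^ (k + 1) * y)) : ℝ) : ℂ) by push_cast; ring]
        exact Complex.ofReal_im _
      have hsmall : ∀ k ∈ Finset.range K, |R k| ≤ 2 / |(ζ ^ (2 ^ (k + 1))).im| := by
        intro k hkmem
        have hk : k < K := Finset.mem_range.1 hkmem
        have hμ : 0 < |(ζ ^ (2 ^ (k + 1))).im| := abs_pos.2 (zeta_mid_im hζpow k hk)
        have h1 : |R k| ≤ ‖z ^ (2 ^ k)‖ / ‖1 + z ^ (2 ^ (k + 1))‖ := by
          rw [hRdef]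
          simp only
          rw [← norm_div]
          exact Complex.abs_im_le_norm _
        have h4 : 2⁻¹ ≤ r ^ (2 ^ (k + 1)) :=
          le_trans hhalf (pow_le_pow_of_le_one (le_of_lt hr0) (le_of_lt hr1)
            (Nat.pow_le_pow_right (by norm_num) (by omega)))
        have hdenlb : 2⁻¹ * |(ζ ^ (2 ^ (k + 1))).im| ≤ ‖1 + z ^ (2 ^ (k + 1))‖ := by
          have h2 : |(1 + z ^ (2 ^ (k + 1))).im| ≤ ‖1 + z ^ (2 ^ (k + 1))‖ := by
            exact Complex.abs_im_le_norm _
          have h3 : (1 + z ^ (2 ^ (k + 1))).im = r ^ (2 ^ (k + 1)) * (ζ ^ (2 ^ (k + 1))).im := by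
            rw [hzp (k + 1), Complex.add_im, Complex.one_im, ofReal_mul_im', zero_add]
          calc 2⁻¹ * |(ζ ^ (2 ^ (k + 1))).im|
              ≤ r ^ (2 ^ (k + 1)) * |(ζ ^ (2 ^ (k + 1))).im| :=
                mul_le_mul_of_nonneg_right h4 (abs_nonneg _)
            _ = |(1 + z ^ (2 ^ (k + 1))).im| := by
                rw [h3, abs_mul, abs_of_pos (hrpos _)]
            _ ≤ ‖1 + z ^ (2 ^ (k + 1))‖ := h2
        have hnum : ‖z ^ (2 ^ k)‖ ≤ 1 := by
          rw [norm_pow, hzdef, hznorm r hr0 hr1]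
          exact pow_le_one₀ (le_of_lt hr0) (le_of_lt hr1)
        calc |R k| ≤ ‖z ^ (2 ^ k)‖ / ‖1 + z ^ (2 ^ (k + 1))‖ := h1
          _ ≤ 1 / (2⁻¹ * |(ζ ^ (2 ^ (k + 1))).im|) :=
              div_le_div₀ zero_le_one hnum (by positivity) hdenlb
          _ = 2 / |(ζ ^ (2 ^ (k + 1))).im| := by
              rw [one_div, mul_inv, inv_inv, div_eq_mul_inv]
      have hzero : ∑' i : ℕ, R (i + (K + 1)) = 0 := by
        have h : ∀ i : ℕ, R (i + (K + 1)) = 0 := fun i => htail _ (by omega)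
        calc ∑' i : ℕ, R (i + (K + 1)) = ∑' _ : ℕ, (0 : ℝ) := tsum_congr h
          _ = 0 := tsum_zero
      have hsplit := Summable.sum_add_tsum_nat_add (f := R) (K + 1) hR.summable
      have hSim : S.im = ∑ i ∈ Finset.range K, R i + R K := by
        rw [← hR.tsum_eq, ← hsplit, hzero, add_zero, Finset.sum_range_succ]
      have habs : |∑ i ∈ Finset.range K, R i| ≤ C := by
        rw [hCdef]
        exact le_trans (Finset.abs_sum_le_sum_abs _ _) (Finset.sum_le_sum hsmall)
      have hRKle : |R K| ≤ |S.im| + |∑ i ∈ Finset.range K, R i| := by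
        have hh : R K = S.im - ∑ i ∈ Finset.range K, R i := by rw [hSim]; ring
        calc |R K| = |S.im + -(∑ i ∈ Finset.range K, R i)| := by rw [hh, sub_eq_add_neg]
          _ ≤ |S.im| + |-(∑ i ∈ Finset.range K, R i)| := abs_add_le _ _
          _ = |S.im| + |∑ i ∈ Finset.range K, R i| := by rw [abs_neg]
      have h6 : |S.im| ≤ ‖S‖ := by
        exact Complex.abs_im_le_norm S
      linarith
    -- E2 : upper bound
    have hqa : 0 < ‖(P.coeff d).eval ζ‖ := norm_pos_iff.2 hζq
    set Nζ : ℝ := ∑ i ∈ Finset.range d, ‖(P.coeff i).eval ζ‖ with hNζ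
    have hNζ0 : 0 ≤ Nζ := Finset.sum_nonneg fun i _ => norm_nonneg _
    clear_value Nζ
    set B : ℝ := max 1 ((Nζ + 1) / (‖(P.coeff d).eval ζ‖ / 2)) with hB
    clear_value B
    have hcont : ∀ i : ℕ, Filter.Tendsto (fun r : ℝ => (P.coeff i).eval ((r : ℂ) * ζ)) l
        (𝓝 ((P.coeff i).eval ζ)) := by
      intro i
      have h1 : Filter.Tendsto (fun r : ℝ => (r : ℂ) * ζ) l (𝓝 ζ) := by
        have hc : Continuous fun r : ℝ => (r : ℂ) * ζ :=
          Complex.continuous_ofReal.mul continuous_const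
        have h2 := hc.tendsto 1
        rw [show ((1 : ℝ) : ℂ) * ζ = ζ by simp] at h2
        rw [hl]
        exact h2.mono_left nhdsWithin_le_nhds
      exact ((P.coeff i).continuous.tendsto ζ).comp h1
    have hevA : ∀ᶠ r : ℝ in l, ‖(P.coeff d).eval ζ‖ / 2 ≤ ‖(P.coeff d).eval ((r : ℂ) * ζ)‖ :=
      ((hcont d).norm).eventually (eventually_ge_nhds (by linarith))
    have hevN : ∀ᶠ r : ℝ in l,
        ∑ i ∈ Finset.range d, ‖(P.coeff i).eval ((r : ℂ) * ζ)‖ ≤ Nζ + 1 := by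
      have ht : Filter.Tendsto
          (fun r : ℝ => ∑ i ∈ Finset.range d, ‖(P.coeff i).eval ((r : ℂ) * ζ)‖) l (𝓝 Nζ) := by
        rw [hNζ]
        apply tendsto_finset_sum
        intro i _
        exact (hcont i).norm
      exact ht.eventually (eventually_le_nhds (by linarith))
    have E2 : ∀ᶠ r : ℝ in l, ‖∑' n : ℕ, (g (n + 1) : ℂ) * ((r : ℂ) * ζ) ^ (n + 1)‖ ≤ B := by
      filter_upwards [hev_mem, hevA, hevN] with r hr hA hN
      obtain ⟨hr0, hr1⟩ := hr
      set z : ℂ := (r : ℂ) * ζ with hzdef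
      have hz : ‖z‖ < 1 := by rw [hzdef, hznorm r hr0 hr1]; exact hr1
      set S : ℂ := ∑' n : ℕ, (g (n + 1) : ℂ) * z ^ (n + 1) with hSdef
      have h0 := hPz z hz
      rw [Polynomial.eval₂_eq_sum_range] at h0
      rw [← hd] at h0
      rw [← hSdef] at h0
      have h0' : ∑ i ∈ Finset.range (d + 1), (P.coeff i).eval z * S ^ i = 0 := by
        simp only [Polynomial.coe_evalRingHom] at h0
        exact h0
      clear_value z S
      have hApos : (0 : ℝ) < ‖(P.coeff d).eval ζ‖ / 2 := by linarith
      have hAne : (P.coeff d).eval z ≠ 0 := by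
        intro hh
        rw [hh] at hA
        rw [norm_zero] at hA
        linarith
      have hrb := root_bound hd1 (fun i => (P.coeff i).eval z) S h0' hAne
      refine le_trans hrb ?_
      rw [hB]
      apply max_le_max (le_refl (1 : ℝ))
      exact div_le_div₀ (by linarith) hN hApos hA
    -- E3 : divergence
    have E3 : Filter.Tendsto (fun r : ℝ => 2⁻¹ * (1 - r ^ (2 ^ (K + 1)))⁻¹ - C) l Filter.atTop := by
      have h0 : Filter.Tendsto (fun r : ℝ => 1 - r ^ (2 ^ (K + 1))) l (nhdsWithin 0 (Set.Ioi 0)) := by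
        rw [tendsto_nhdsWithin_iff]
        constructor
        · have hc : Continuous fun r : ℝ => 1 - r ^ (2 ^ (K + 1)) :=
            continuous_const.sub (continuous_pow _)
          have h2 := hc.tendsto 1
          rw [show (1 : ℝ) - 1 ^ (2 ^ (K + 1)) = 0 by norm_num] at h2
          rw [hl]
          exact h2.mono_left nhdsWithin_le_nhds
        · filter_upwards [hev_mem] with r hr
          have := pow_lt_one₀ (le_of_lt hr.1) hr.2 (show 2 ^ (K + 1) ≠ 0 by positivity)
          exact Set.mem_Ioi.2 (by linarith)
      have h1 : Filter.Tendsto (fun r : ℝ => (1 - r ^ (2 ^ (K + 1)))⁻¹) l Filter.atTop :=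
        tendsto_inv_nhdsGT_zero.comp h0
      have h2 := Filter.Tendsto.const_mul_atTop (show (0 : ℝ) < 2⁻¹ by norm_num) h1
      have h3 := Filter.tendsto_atTop_add_const_right l (-C) h2
      simpa [sub_eq_add_neg] using h3
    have hBig : ∀ᶠ r : ℝ in l, B < 2⁻¹ * (1 - r ^ (2 ^ (K + 1)))⁻¹ - C :=
      E3.eventually_gt_atTop B
    obtain ⟨r, h1, h2, h3⟩ := (hBig.and (E1.and E2)).exists
    linarith
end

section
/- For every complex z with |z| < 1, the generating function T(z) = Σ_{n=1}^∞ t(n) z^n satisfies T(z³) = T(z) - z/(1 + z + z²). -/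
set_option maxHeartbeats 1000000 in
/-- For `|z| < 1`, `T(z³) = T(z) - z/(1 + z + z²)`, where
`T(z) = Σ_{n≥1} t(n) zⁿ`. -/
theorem stmt_11 (t : ℕ → ℤ)
    (ht1 : t 1 = 1)
    (htmul : ∀ m n : ℕ, 1 ≤ m → 1 ≤ n → t (m * n) = t m * t n)
    (ht3 : t 3 = 1)
    (htp : ∀ p : ℕ, p.Prime → p ≠ 3 → t p = if p % 3 = 2 then -1 else 1)
    (z : ℂ) (hz : ‖z‖ < 1) :
    (∑' n : ℕ, (t (n + 1) : ℂ) * (z ^ 3) ^ (n + 1))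
      = (∑' n : ℕ, (t (n + 1) : ℂ) * z ^ (n + 1)) - z / (1 + z + z ^ 2) := by
  -- t on integers coprime to 3
  have chi : ∀ n : ℕ, 0 < n → ¬ (3 ∣ n) → t n = if n % 3 = 2 then -1 else 1 := by
    intro n
    induction n using Nat.strong_induction_on with
    | _ n ih =>
      intro hn hd
      rcases Nat.lt_or_ge n 2 with h2 | h2
      · interval_cases n
        · simp [ht1]
      by_cases hp : n.Prime
      · exact htp n hp (by rintro rfl; exact hd dvd_rfl)
      · obtain ⟨m, hmdvd, hm2, hmlt⟩ := Nat.exists_dvd_of_not_prime2 h2 hp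
        obtain ⟨k, rfl⟩ := hmdvd
        have hk1 : 1 ≤ k := Nat.one_le_iff_ne_zero.2 (by rintro rfl; simp at hn)
        have hklt : k < m * k := by nlinarith
        have h3m : ¬ (3 ∣ m) := fun h => hd (h.mul_right k)
        have h3k : ¬ (3 ∣ k) := fun h => hd (h.mul_left m)
        rw [htmul m k (by omega) hk1, ih m hmlt (by omega) h3m, ih k hklt hk1 h3k]
        have hmod := Nat.mul_mod m k 3
        have hm3 : m % 3 = 1 ∨ m % 3 = 2 := by omega
        have hk3 : k % 3 = 1 ∨ k % 3 = 2 := by omega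
        rcases hm3 with hm3 | hm3 <;> rcases hk3 with hk3 | hk3 <;>
          simp [hm3, hk3] at hmod <;> simp [hm3, hk3, hmod]
  have h3mul : ∀ n : ℕ, 1 ≤ n → t (3 * n) = t n := fun n hn => by
    rw [htmul 3 n (by norm_num) hn, ht3, one_mul]
  -- t takes values ±1
  have habs : ∀ n : ℕ, 0 < n → t n = 1 ∨ t n = -1 := by
    intro n
    induction n using Nat.strong_induction_on with
    | _ n ih =>
      intro hn
      by_cases hd : 3 ∣ n
      · obtain ⟨m, rfl⟩ := hd
        have hm : 0 < m := by omega
        rw [h3mul m hm]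
        exact ih m (by omega) hm
      · rw [chi n hn hd]; split <;> simp
  -- summability facts
  have hzlt : ‖z‖ < 1 := hz
  have hz3lt : ‖z ^ 3‖ < 1 := by
    rw [norm_pow]
    calc ‖z‖ ^ 3 ≤ ‖z‖ := pow_le_of_le_one (norm_nonneg z) hz.le (by norm_num)
      _ < 1 := hz
  have hbound : ∀ (w : ℂ) (n : ℕ), ‖(t (n + 1) : ℂ) * w ^ (n + 1)‖ ≤ ‖w‖ ^ n * ‖w‖ := by
    intro w n
    rw [norm_mul, norm_pow, pow_succ]
    have : ‖(t (n + 1) : ℂ)‖ = 1 := by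
      rcases habs (n + 1) (Nat.succ_pos n) with h | h <;> simp [h]
    rw [this, one_mul]
  have hsummable : ∀ w : ℂ, ‖w‖ < 1 → Summable (fun n : ℕ => (t (n + 1) : ℂ) * w ^ (n + 1)) := by
    intro w hw
    exact Summable.of_norm_bounded
      ((summable_geometric_of_lt_one (norm_nonneg w) hw).mul_right ‖w‖) (hbound w)
  have hS : Summable (fun n : ℕ => (t (n + 1) : ℂ) * z ^ (n + 1)) := hsummable z hzlt
  have hS3 : Summable (fun n : ℕ => (t (n + 1) : ℂ) * (z ^ 3) ^ (n + 1)) := hsummable _ hz3lt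
  -- geometric summability
  have hgeo : Summable (fun k : ℕ => (z ^ 3) ^ k) := summable_geometric_of_norm_lt_one hz3lt
  have hgeo1 : Summable (fun k : ℕ => z * (z ^ 3) ^ k) := hgeo.mul_left z
  have hgeo2 : Summable (fun k : ℕ => z ^ 2 * (z ^ 3) ^ k) := hgeo.mul_left (z ^ 2)
  -- split T(z) into residue classes mod 3
  set g : ℕ → ℂ := fun n => (t (n + 1) : ℂ) * z ^ (n + 1) with hg
  have hsplit : (∑' n : ℕ, g n)
      = ∑' k : ℕ, (g (k * 3) + g (k * 3 + 1) + g (k * 3 + 2)) := by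
    have he := ((Nat.divModEquiv 3).symm.tsum_eq g).symm
    rw [he]
    have hSe : Summable (fun p : ℕ × Fin 3 => g ((Nat.divModEquiv 3).symm p)) :=
      (Nat.divModEquiv 3).symm.summable_iff.2 hS
    rw [Summable.tsum_prod hSe]
    congr 1
    funext k
    rw [tsum_fintype]
    simp [Nat.divModEquiv, Fin.sum_univ_three]
  -- evaluate each class
  have hval : ∀ k : ℕ, g (k * 3) + g (k * 3 + 1) + g (k * 3 + 2)
      = z * (z ^ 3) ^ k - z ^ 2 * (z ^ 3) ^ k + (t (k + 1) : ℂ) * (z ^ 3) ^ (k + 1) := by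
    intro k
    have h1 : t (k * 3 + 1) = 1 := by
      rw [chi (k * 3 + 1) (by omega) (by omega)]
      simp [Nat.add_mul_mod_self_right]
    have h2 : t (k * 3 + 2) = -1 := by
      rw [chi (k * 3 + 2) (by omega) (by omega)]
      simp [Nat.add_mul_mod_self_right]
    have h3 : t (k * 3 + 2 + 1) = t (k + 1) := by
      have : k * 3 + 2 + 1 = 3 * (k + 1) := by ring
      rw [this, h3mul (k + 1) (by omega)]
    simp only [hg, h1, h2, h3]
    push_cast
    ring
  rw [hsplit]
  simp only [hval]
  rw [Summable.tsum_add ((hgeo1.sub hgeo2)) hS3, Summable.tsum_sub hgeo1 hgeo2,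
    tsum_mul_left, tsum_mul_left, tsum_geometric_of_norm_lt_one hz3lt]
  -- nonvanishing
  have hz3ne : (1 : ℂ) - z ^ 3 ≠ 0 := by
    intro h
    have : z ^ 3 = 1 := by linear_combination -h
    have h4 := congrArg norm this
    rw [norm_pow, norm_one] at h4
    have h5 : ‖z‖ ^ 3 < 1 := pow_lt_one₀ (norm_nonneg z) hz (by norm_num)
    linarith
  have hqne : (1 : ℂ) + z + z ^ 2 ≠ 0 := by
    intro h
    have h3 : z ^ 3 = 1 := by linear_combination (z - 1) * h
    have h4 := congrArg norm h3
    rw [norm_pow, norm_one] at h4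
    have h5 : ‖z‖ ^ 3 < 1 := pow_lt_one₀ (norm_nonneg z) hz (by norm_num)
    linarith
  field_simp
  ring
end

section
/- For every complex z with |z| < 1, Σ_{n=1}^∞ t(n) z^n = Σ_{k=0}^∞ z^(3^k)/(1 + z^(3^k) + z^(2·3^k)), where t is as below. -/
open Function Set

private def chi (j : ℕ) : ℤ := if j % 3 = 1 then 1 else if j % 3 = 2 then -1 else 0

private lemma chi_mul (a b : ℕ) (ha : a % 3 ≠ 0) (hb : b % 3 ≠ 0) :
    chi (a * b) = chi a * chi b := by
  have h1 : a % 3 = 1 ∨ a % 3 = 2 := by omega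
  have h2 : b % 3 = 1 ∨ b % 3 = 2 := by omega
  have hab : (a * b) % 3 = (a % 3) * (b % 3) % 3 := Nat.mul_mod a b 3
  rcases h1 with h1 | h1 <;> rcases h2 with h2 | h2 <;>
    simp [chi, hab, h1, h2]

private lemma chi_ne_zero {j : ℕ} (hj : j % 3 ≠ 0) : chi j ≠ 0 := by
  have : j % 3 = 1 ∨ j % 3 = 2 := by omega
  rcases this with h | h <;> simp [chi, h]

private lemma norm_chi_le (j : ℕ) : ‖(chi j : ℂ)‖ ≤ 1 := by
  unfold chi
  split <;> [skip; split] <;> simp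

private lemma chi_tsum_eq (w : ℂ) (hw : ‖w‖ < 1) :
    ∑' j : ℕ, (chi j : ℂ) * w ^ j = w / (1 + w + w ^ 2) := by
  have hw3 : ‖w ^ 3‖ < 1 := by
    rw [norm_pow]; exact pow_lt_one₀ (norm_nonneg w) hw (by norm_num)
  have h3 : (1 : ℂ) - w ^ 3 ≠ 0 := by
    intro h
    have : w ^ 3 = 1 := by linear_combination -h
    rw [this] at hw3; simp at hw3
  have hq : (1 : ℂ) + w + w ^ 2 ≠ 0 := by
    intro h
    apply h3
    linear_combination (1 - w) * h
  set a : ℕ → ℂ := fun j => if j % 3 = 1 then w ^ j else 0 with ha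
  set b : ℕ → ℂ := fun j => if j % 3 = 2 then -w ^ j else 0 with hb
  have hsa : Summable a := by
    apply Summable.of_norm_bounded (summable_geometric_of_lt_one (norm_nonneg w) hw)
    intro j
    simp only [ha]
    split
    · simp [norm_pow]
    · simpa using pow_nonneg (norm_nonneg w) j
  have hsb : Summable b := by
    apply Summable.of_norm_bounded (summable_geometric_of_lt_one (norm_nonneg w) hw)
    intro j
    simp only [hb]
    split
    · simp [norm_pow]
    · simpa using pow_nonneg (norm_nonneg w) j
  have hab : ∀ j : ℕ, (chi j : ℂ) * w ^ j = a j + b j := by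
    intro j
    have : j % 3 = 0 ∨ j % 3 = 1 ∨ j % 3 = 2 := by omega
    rcases this with h | h | h <;> simp [chi, ha, hb, h]
  have hta : ∑' j, a j = w * (1 - w ^ 3)⁻¹ := by
    have hinj : Function.Injective (fun m : ℕ => 3 * m + 1) := by
      intro x y h; simpa using h
    have hsupp : support a ⊆ Set.range (fun m : ℕ => 3 * m + 1) := by
      intro j hj
      have : j % 3 = 1 := by
        by_contra h; simp [ha, h] at hj
      exact ⟨j / 3, by show 3 * (j / 3) + 1 = j; omega⟩
    have := hinj.tsum_eq hsupp
    rw [← this]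
    have : ∀ m : ℕ, a (3 * m + 1) = w * (w ^ 3) ^ m := by
      intro m
      have h1 : (3 * m + 1) % 3 = 1 := by omega
      simp only [ha]
      rw [if_pos h1]; ring
    rw [tsum_congr this, tsum_mul_left, tsum_geometric_of_norm_lt_one hw3]
  have htb : ∑' j, b j = -(w ^ 2 * (1 - w ^ 3)⁻¹) := by
    have hinj : Function.Injective (fun m : ℕ => 3 * m + 2) := by
      intro x y h; simpa using h
    have hsupp : support b ⊆ Set.range (fun m : ℕ => 3 * m + 2) := by
      intro j hj
      have : j % 3 = 2 := by
        by_contra h; simp [hb, h] at hj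
      exact ⟨j / 3, by show 3 * (j / 3) + 2 = j; omega⟩
    have := hinj.tsum_eq hsupp
    rw [← this]
    have : ∀ m : ℕ, b (3 * m + 2) = -(w ^ 2 * (w ^ 3) ^ m) := by
      intro m
      have h1 : (3 * m + 2) % 3 = 2 := by omega
      simp only [hb]
      rw [if_pos h1]; ring
    rw [tsum_congr this, tsum_neg, tsum_mul_left, tsum_geometric_of_norm_lt_one hw3]
  calc ∑' j : ℕ, (chi j : ℂ) * w ^ j = ∑' j, (a j + b j) := tsum_congr hab
    _ = (∑' j, a j) + ∑' j, b j := Summable.tsum_add hsa hsb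
    _ = w * (1 - w ^ 3)⁻¹ + -(w ^ 2 * (1 - w ^ 3)⁻¹) := by rw [hta, htb]
    _ = w / (1 + w + w ^ 2) := by field_simp; ring

private lemma t_pow3 (t : ℕ → ℤ) (ht1 : t 1 = 1)
    (htmul : ∀ m n : ℕ, 1 ≤ m → 1 ≤ n → t (m * n) = t m * t n)
    (ht3 : t 3 = 1) : ∀ k : ℕ, t (3 ^ k) = 1 := by
  intro k
  induction k with
  | zero => simpa using ht1
  | succ k ih =>
    rw [pow_succ, htmul _ _ (Nat.one_le_pow _ _ (by norm_num)) (by norm_num), ih, ht3]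
    norm_num

private lemma t_eq_chi (t : ℕ → ℤ) (ht1 : t 1 = 1)
    (htmul : ∀ m n : ℕ, 1 ≤ m → 1 ≤ n → t (m * n) = t m * t n)
    (htp : ∀ p : ℕ, p.Prime → p ≠ 3 → t p = if p % 3 = 2 then -1 else 1) :
    ∀ j : ℕ, 1 ≤ j → j % 3 ≠ 0 → t j = chi j := by
  intro j
  induction j using Nat.strong_induction_on with
  | _ j ih =>
    intro hj1 hj3
    rcases eq_or_lt_of_le hj1 with h1 | h1
    · rw [← h1, ht1]; simp [chi]
    · set p := j.minFac with hpdef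
      have hpp : p.Prime := Nat.minFac_prime (by omega)
      have hp2 : 2 ≤ p := hpp.two_le
      obtain ⟨m, hm⟩ := Nat.minFac_dvd j
      rw [← hpdef] at hm
      have hp3 : p ≠ 3 := by
        intro h
        rw [h] at hm
        omega
      have hp3' : p % 3 ≠ 0 := by
        intro h
        have h3p : 3 ∣ p := by omega
        exact hp3 ((Nat.prime_dvd_prime_iff_eq (by norm_num) hpp).mp h3p).symm
      have hm1 : 1 ≤ m := by
        rcases Nat.eq_zero_or_pos m with h | h
        · rw [h, mul_zero] at hm; omega
        · exact h
      have hmlt : m < j := by nlinarith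
      have hm3 : m % 3 ≠ 0 := by
        intro h
        obtain ⟨m', hm'⟩ : 3 ∣ m := by omega
        apply hj3
        have : j = 3 * (p * m') := by rw [hm, hm']; ring
        omega
      have htj : t j = t p * t m := by rw [hm]; exact htmul p m hpp.one_le hm1
      have hTp : t p = chi p := by
        rw [htp p hpp hp3]
        have : p % 3 = 1 ∨ p % 3 = 2 := by omega
        rcases this with h | h <;> simp [chi, h]
      have hTm : t m = chi m := ih m hmlt hm1 hm3
      rw [htj, hTp, hTm, hm, chi_mul p m hp3' hm3]


/-- For `|z| < 1`,
`Σ_{n≥1} t(n) zⁿ = Σ_{k≥0} z^(3^k)/(1 + z^(3^k) + z^(2·3^k))`. -/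
theorem stmt_12 (t : ℕ → ℤ)
    (ht1 : t 1 = 1)
    (htmul : ∀ m n : ℕ, 1 ≤ m → 1 ≤ n → t (m * n) = t m * t n)
    (ht3 : t 3 = 1)
    (htp : ∀ p : ℕ, p.Prime → p ≠ 3 → t p = if p % 3 = 2 then -1 else 1)
    (z : ℂ) (hz : ‖z‖ < 1) :
    (∑' n : ℕ, (t (n + 1) : ℂ) * z ^ (n + 1))
      = ∑' k : ℕ, z ^ (3 ^ k) / (1 + z ^ (3 ^ k) + z ^ (2 * 3 ^ k)) := by
  set g : ℕ × ℕ → ℂ := fun p => (chi p.2 : ℂ) * z ^ (3 ^ p.1 * p.2) with hgdef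
  have hzc : ∀ k : ℕ, ‖z ^ (3 ^ k : ℕ)‖ < 1 := by
    intro k
    rw [norm_pow]
    exact pow_lt_one₀ (norm_nonneg z) hz (pow_pos (by norm_num : (0:ℕ) < 3) k).ne'
  -- summability of g
  have hg : Summable g := by
    apply Summable.of_norm
    apply Summable.of_nonneg_of_le (fun _ => norm_nonneg _) ?_
      ((summable_geometric_of_lt_one (norm_nonneg z) hz).mul_of_nonneg
        (summable_geometric_of_lt_one (norm_nonneg z) hz)
        (fun _ => pow_nonneg (norm_nonneg z) _) (fun _ => pow_nonneg (norm_nonneg z) _))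
    rintro ⟨k, j⟩
    show ‖(chi j : ℂ) * z ^ (3 ^ k * j)‖ ≤ ‖z‖ ^ k * ‖z‖ ^ j
    by_cases hj : j % 3 = 0
    · have hc : chi j = 0 := by simp [chi, hj]
      rw [hc]
      simp
      positivity
    · have hj1 : 1 ≤ j := by omega
      have hk1 : k + 1 ≤ 3 ^ k := (Nat.lt_pow_self (by norm_num) : k < 3 ^ k)
      have hexp : k + j ≤ 3 ^ k * j := by nlinarith
      calc ‖(chi j : ℂ) * z ^ (3 ^ k * j)‖ ≤ 1 * ‖z‖ ^ (3 ^ k * j) := by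
            rw [norm_mul, norm_pow]
            exact mul_le_mul_of_nonneg_right (norm_chi_le j) (pow_nonneg (norm_nonneg z) _)
        _ = ‖z‖ ^ (3 ^ k * j) := one_mul _
        _ ≤ ‖z‖ ^ (k + j) := pow_le_pow_of_le_one (norm_nonneg z) hz.le hexp
        _ = ‖z‖ ^ k * ‖z‖ ^ j := pow_add _ _ _
  have hsk : ∀ k : ℕ, Summable (fun j : ℕ => g (k, j)) := by
    intro k
    apply Summable.of_norm_bounded
      (summable_geometric_of_lt_one (norm_nonneg (z ^ (3 ^ k))) (hzc k))
    intro j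
    show ‖(chi j : ℂ) * z ^ (3 ^ k * j)‖ ≤ ‖z ^ 3 ^ k‖ ^ j
    rw [pow_mul, norm_mul, norm_pow]
    exact mul_le_of_le_one_left (pow_nonneg (norm_nonneg _) j) (norm_chi_le j)
  have hmem : ∀ p : ℕ × ℕ, g p ≠ 0 → p.2 % 3 ≠ 0 ∧ 1 ≤ p.2 := by
    rintro ⟨k, j⟩ hp
    have h1 : (chi j : ℂ) ≠ 0 := fun h => hp (by simp [hgdef, h])
    have h2 : j % 3 ≠ 0 := by
      intro h
      have : chi j = 0 := by simp [chi, h]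
      rw [this] at h1
      simp at h1
    exact ⟨h2, by omega⟩
  have huniq : ∀ k j k' j' : ℕ, j % 3 ≠ 0 → j' % 3 ≠ 0 →
      3 ^ k * j = 3 ^ k' * j' → k = k' ∧ j = j' := by
    have key : ∀ k j k' j' : ℕ, k ≤ k' → j % 3 ≠ 0 → j' % 3 ≠ 0 →
        3 ^ k * j = 3 ^ k' * j' → k = k' := by
      intro k j k' j' hkk hj hj' h
      by_contra hne
      have hklt : k < k' := lt_of_le_of_ne hkk hne
      have hpow : (3 : ℕ) ^ k' = 3 ^ k * 3 ^ (k' - k) := by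
        rw [← pow_add]; congr 1; omega
      have hj2 : j = 3 ^ (k' - k) * j' := by
        apply Nat.eq_of_mul_eq_mul_left (pow_pos (by norm_num : (0:ℕ) < 3) k)
        rw [h, hpow, mul_assoc]
      have h3 : (3 : ℕ) ∣ j := by
        rw [hj2]
        exact Dvd.dvd.mul_right (dvd_pow_self 3 (by omega : k' - k ≠ 0)) j'
      omega
    intro k j k' j' hj hj' h
    rcases le_total k k' with hkk | hkk
    · have hk := key k j k' j' hkk hj hj' h
      subst hk
      exact ⟨rfl, Nat.eq_of_mul_eq_mul_left (pow_pos (by norm_num : (0:ℕ) < 3) k) h⟩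
    · have hk := key k' j' k j hkk hj' hj h.symm
      subst hk
      exact ⟨rfl, Nat.eq_of_mul_eq_mul_left (pow_pos (by norm_num : (0:ℕ) < 3) _) h⟩
  have step1 : (∑' n : ℕ, (t (n + 1) : ℂ) * z ^ (n + 1)) = ∑' p : ℕ × ℕ, g p := by
    apply tsum_eq_tsum_of_ne_zero_bij (fun p => 3 ^ p.1.1 * p.1.2 - 1)
    · rintro ⟨⟨k, j⟩, hp⟩ ⟨⟨k', j'⟩, hp'⟩ h
      simp only at h
      obtain ⟨hj, hj1⟩ := hmem _ hp
      obtain ⟨hj', hj1'⟩ := hmem _ hp'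
      have hpos : 1 ≤ 3 ^ k * j := Nat.mul_pos (pow_pos (by norm_num : (0:ℕ) < 3) k) hj1
      have hpos' : 1 ≤ 3 ^ k' * j' := Nat.mul_pos (pow_pos (by norm_num : (0:ℕ) < 3) k') hj1'
      have h' : 3 ^ k * j = 3 ^ k' * j' := by omega
      obtain ⟨hk, hjj⟩ := huniq k j k' j' hj hj' h'
      simp only [Subtype.mk.injEq, Prod.mk.injEq]
      exact ⟨hk, hjj⟩
    · intro n hn
      have hn' : (t (n + 1) : ℂ) * z ^ (n + 1) ≠ 0 := hn
      have hzn : z ^ (n + 1) ≠ 0 := fun h => hn' (by rw [h, mul_zero])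
      have hN : n + 1 ≠ 0 := Nat.succ_ne_zero n
      set k := (n + 1).factorization 3 with hkdef
      set j := (n + 1) / 3 ^ k with hjdef
      have hfact : 3 ^ k * j = n + 1 := Nat.ordProj_mul_ordCompl_eq_self (n + 1) 3
      have h3j : ¬ (3 : ℕ) ∣ j := Nat.not_dvd_ordCompl (by norm_num) hN
      have hgz : g (k, j) ≠ 0 := by
        have hc : (chi j : ℂ) ≠ 0 := by
          exact_mod_cast Int.cast_ne_zero.mpr (chi_ne_zero (by omega))
        have hz2 : z ^ (3 ^ k * j) ≠ 0 := by rw [hfact]; exact hzn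
        exact mul_ne_zero hc hz2
      exact ⟨⟨(k, j), hgz⟩, by simp only; omega⟩
    · rintro ⟨⟨k, j⟩, hp⟩
      obtain ⟨hj, hj1⟩ := hmem _ hp
      have hpos : 1 ≤ 3 ^ k * j := Nat.mul_pos (pow_pos (by norm_num : (0:ℕ) < 3) k) hj1
      simp only
      have hE : 3 ^ k * j - 1 + 1 = 3 ^ k * j := by omega
      rw [hE]
      have hT : t (3 ^ k * j) = chi j := by
        rw [htmul _ _ (Nat.one_le_pow _ _ (by norm_num)) hj1,
          t_pow3 t ht1 htmul ht3 k, t_eq_chi t ht1 htmul htp j hj1 hj, one_mul]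
      rw [hT]
  rw [step1, Summable.tsum_prod' hg hsk]
  apply tsum_congr
  intro k
  have hc : ∀ j : ℕ, g (k, j) = (chi j : ℂ) * (z ^ (3 ^ k)) ^ j := by
    intro j
    rw [hgdef]
    simp only
    rw [← pow_mul]
  rw [tsum_congr hc, chi_tsum_eq _ (hzc k), ← pow_mul, mul_comm (3 ^ k) 2]
end

section
/- Let p be an odd prime and f : ℕ → {-1,1} a character-like function associated to p (completely multiplicative, f(p) = ±1, and f(kp + i) = f(i) for 1 ≤ i ≤ p-1 and k ≥ 0). Then for |z| < 1 the generating function F(z) = Σ_{n=1}^∞ f(n) z^n satisfies F(z) = f(p)·F(z^p) + Φ(z)/(1 - z^p), where Φ(z) = Σ_{i=1}^{p-1} f(i) z^i. -/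
/-- For a character-like function `f` associated to an odd prime
`p`, for `|z| < 1`: `F(z) = f(p)·F(z^p) + Φ(z)/(1 - z^p)` where
`Φ(z) = Σ_{i=1}^{p-1} f(i) zⁱ`. -/
theorem stmt_14 (p : ℕ) (hp : p.Prime) (hpodd : Odd p)
    (f : ℕ → ℤ)
    (hf1 : f 1 = 1)
    (hfmul : ∀ m n : ℕ, 1 ≤ m → 1 ≤ n → f (m * n) = f m * f n)
    (hfval : ∀ n : ℕ, 1 ≤ n → f n = 1 ∨ f n = -1)
    (hfper : ∀ k i : ℕ, 1 ≤ i → i ≤ p - 1 → f (k * p + i) = f i)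
    (z : ℂ) (hz : ‖z‖ < 1) :
    (∑' n : ℕ, (f (n + 1) : ℂ) * z ^ (n + 1))
      = (f p : ℂ) * (∑' n : ℕ, (f (n + 1) : ℂ) * (z ^ p) ^ (n + 1))
        + (∑ i ∈ Finset.Icc 1 (p - 1), (f i : ℂ) * z ^ i) / (1 - z ^ p) := by
  have hp1 : 1 ≤ p := hp.pos
  have hnormf : ∀ m : ℕ, 1 ≤ m → ‖(f m : ℂ)‖ = 1 := by
    intro m hm
    rcases hfval m hm with h | h <;> simp [h]
  have hq : ‖z ^ p‖ < 1 := by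
    rw [norm_pow]
    exact pow_lt_one₀ (norm_nonneg z) hz hp.ne_zero
  -- helper: for any w with ‖w‖ < 1, the "h" function is summable with tsum = F(w)
  have key : ∀ w : ℂ, ‖w‖ < 1 →
      Summable (fun m : ℕ => if m = 0 then (0:ℂ) else (f m : ℂ) * w ^ m) ∧
      (∑' m : ℕ, if m = 0 then (0:ℂ) else (f m : ℂ) * w ^ m)
        = ∑' n : ℕ, (f (n + 1) : ℂ) * w ^ (n + 1) := by
    intro w hw
    have hbound : ∀ m : ℕ,
        ‖if m = 0 then (0:ℂ) else (f m : ℂ) * w ^ m‖ ≤ ‖w‖ ^ m := by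
      intro m
      rcases Nat.eq_zero_or_pos m with rfl | hm
      · simp
      · rw [if_neg hm.ne', norm_mul, hnormf m hm, one_mul, norm_pow]
    have hsum : Summable (fun m : ℕ => if m = 0 then (0:ℂ) else (f m : ℂ) * w ^ m) :=
      Summable.of_norm_bounded (summable_geometric_of_lt_one (norm_nonneg w) hw) hbound
    refine ⟨hsum, ?_⟩
    rw [hsum.tsum_eq_zero_add]
    simp
  obtain ⟨hsumz, htz⟩ := key z hz
  obtain ⟨hsumq, htq⟩ := key (z ^ p) hq
  set h : ℕ → ℂ := fun m => if m = 0 then (0:ℂ) else (f m : ℂ) * z ^ m with hh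
  haveI : NeZero p := ⟨hp.ne_zero⟩
  -- rewrite LHS as tsum of h
  rw [← htz, ← htq]
  -- transport along the equiv
  have he : (∑' m : ℕ, h m) = ∑' x : ℕ × Fin p, h (x.1 * p + (x.2 : ℕ)) := by
    rw [← (Nat.divModEquiv p).symm.tsum_eq h]
    rfl
  have hsump : Summable (fun x : ℕ × Fin p => h (x.1 * p + (x.2 : ℕ))) :=
    ((Nat.divModEquiv p).symm.summable_iff (f := h)).mpr hsumz
  rw [he, hsump.tsum_prod]
  -- inner tsums over Fin p are finite sums
  have hfin : ∀ k : ℕ, (∑' i : Fin p, h (k * p + (i : ℕ)))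
      = ∑ i ∈ Finset.range p, h (k * p + i) := by
    intro k
    rw [tsum_fintype]
    exact Fin.sum_univ_eq_sum_range (fun i => h (k * p + i)) p
  simp_rw [hfin]
  -- swap tsum and finite sum
  have hsumcol : ∀ i ∈ Finset.range p, Summable (fun k : ℕ => h (k * p + i)) := by
    intro i _
    have hinj : Function.Injective (fun k : ℕ => k * p + i) := by
      intro a b hab
      simp only at hab
      exact Nat.eq_of_mul_eq_mul_right hp.pos (by omega)
    exact hsumz.comp_injective hinj
  rw [Summable.tsum_finsetSum hsumcol]
  -- split off i = 0
  have hsplit : Finset.range p = insert 0 (Finset.Icc 1 (p - 1)) := by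
    ext x
    simp only [Finset.mem_range, Finset.mem_insert, Finset.mem_Icc]
    omega
  rw [hsplit, Finset.sum_insert (by simp)]
  -- i = 0 term
  have h0 : (∑' k : ℕ, h (k * p + 0))
      = (f p : ℂ) * ∑' m : ℕ, if m = 0 then (0:ℂ) else (f m : ℂ) * (z ^ p) ^ m := by
    rw [← tsum_mul_left]
    congr 1
    funext k
    rcases Nat.eq_zero_or_pos k with rfl | hk
    · simp [hh]
    · have hk0 : k * p + 0 ≠ 0 := by positivity
      rw [hh]
      simp only [Nat.add_zero]
      rw [if_neg (Nat.mul_ne_zero hk.ne' hp.ne_zero), if_neg hk.ne',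
        hfmul k p hk hp1, ← pow_mul]
      push_cast
      ring
  -- i ≥ 1 terms
  have h1 : ∀ i ∈ Finset.Icc 1 (p - 1), (∑' k : ℕ, h (k * p + i))
      = (f i : ℂ) * z ^ i * (1 - z ^ p)⁻¹ := by
    intro i hi
    rw [Finset.mem_Icc] at hi
    have hne : ∀ k : ℕ, k * p + i ≠ 0 := fun k => by omega
    have : ∀ k : ℕ, h (k * p + i) = ((f i : ℂ) * z ^ i) * (z ^ p) ^ k := by
      intro k
      rw [hh]
      simp only [if_neg (hne k)]
      rw [hfper k i hi.1 hi.2, pow_add, pow_mul]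
      ring
    simp_rw [this]
    rw [tsum_mul_left, tsum_geometric_of_norm_lt_one hq]
  rw [h0, Finset.sum_congr rfl h1, ← Finset.sum_mul, div_eq_mul_inv]
end

section
/- Let p be an odd prime and f a character-like function associated to p, with F and Φ as below. Then for |z| < 1, F(z) = Σ_{k=0}^∞ f(p)^k · Φ(z^(p^k)) / (1 - z^(p^(k+1))). -/
open Finset Filter

namespace Stmt15

/-- The `n`-th term of the power series `F`, with the (irrelevant) value at `0` zeroed out. -/
noncomputable def g (f : ℕ → ℤ) (w : ℂ) (n : ℕ) : ℂ :=
  if n = 0 then 0 else (f n : ℂ) * w ^ n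

lemma norm_g_le {f : ℕ → ℤ} (hfval : ∀ n : ℕ, 1 ≤ n → f n = 1 ∨ f n = -1)
    (w : ℂ) (n : ℕ) : ‖g f w n‖ ≤ ‖w‖ ^ n := by
  unfold g
  rcases Nat.eq_zero_or_pos n with h | h
  · simp [h]
  · rw [if_neg h.ne', norm_mul, norm_pow]
    have h1 : ‖(f n : ℂ)‖ = 1 := by rcases hfval n h with h1 | h1 <;> simp [h1]
    rw [h1, one_mul]

lemma summable_g {f : ℕ → ℤ} (hfval : ∀ n : ℕ, 1 ≤ n → f n = 1 ∨ f n = -1)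
    {w : ℂ} (hw : ‖w‖ < 1) : Summable (g f w) :=
  Summable.of_norm_bounded (summable_geometric_of_lt_one (norm_nonneg w) hw)
    (norm_g_le hfval w)

lemma norm_tsum_g_le {f : ℕ → ℤ} (hfval : ∀ n : ℕ, 1 ≤ n → f n = 1 ∨ f n = -1)
    {w : ℂ} (hw : ‖w‖ < 1) :
    ‖∑' n, g f w n‖ ≤ ‖w‖ * (1 - ‖w‖)⁻¹ := by
  have hsum := summable_g hfval hw
  rw [Summable.tsum_eq_zero_add hsum]
  have h0 : g f w 0 = 0 := by simp [g]
  rw [h0, zero_add]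
  have hsum' : Summable (fun n => g f w (n + 1)) := by
    exact (summable_nat_add_iff 1).mpr hsum
  have hgeo : HasSum (fun n => ‖w‖ ^ (n + 1)) (‖w‖ * (1 - ‖w‖)⁻¹) := by
    have := (hasSum_geometric_of_lt_one (norm_nonneg w) hw).mul_left ‖w‖
    simpa [pow_succ, mul_comm] using this
  exact tsum_of_norm_bounded hgeo (fun n => norm_g_le hfval w (n + 1))

set_option maxHeartbeats 1000000 in
lemma funEq {p : ℕ} (hp : p.Prime) {f : ℕ → ℤ}
    (hfmul : ∀ m n : ℕ, 1 ≤ m → 1 ≤ n → f (m * n) = f m * f n)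
    (hfval : ∀ n : ℕ, 1 ≤ n → f n = 1 ∨ f n = -1)
    (hfper : ∀ k i : ℕ, 1 ≤ i → i ≤ p - 1 → f (k * p + i) = f i)
    {w : ℂ} (hw : ‖w‖ < 1) :
    ∑' n, g f w n = (f p : ℂ) * ∑' n, g f (w ^ p) n
      + (∑ i ∈ Finset.Icc 1 (p - 1), (f i : ℂ) * w ^ i) / (1 - w ^ p) := by
  have hpp : 0 < p := hp.pos
  haveI : NeZero p := ⟨hpp.ne'⟩
  have hwp : ‖w ^ p‖ < 1 := by
    rw [norm_pow]; exact pow_lt_one₀ (norm_nonneg w) hw hpp.ne'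
  set Φ : ℂ := ∑ i ∈ Finset.Icc 1 (p - 1), (f i : ℂ) * w ^ i with hΦ
  -- reindex via ℕ ≃ ℕ × Fin p
  have hgsum := summable_g hfval hw
  have hcomp : Summable (g f w ∘ ⇑(Nat.divModEquiv p).symm) :=
    ((Nat.divModEquiv p).symm.summable_iff).mpr hgsum
  have hcomp' : Summable (fun x : ℕ × Fin p => g f w (x.1 * p + (x.2 : ℕ))) := by
    have : (g f w ∘ ⇑(Nat.divModEquiv p).symm)
        = fun x : ℕ × Fin p => g f w (x.1 * p + (x.2 : ℕ)) := by
      funext x; simp [Function.comp, Nat.divModEquiv]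
    rwa [this] at hcomp
  have h1 : ∑' n, g f w n = ∑' x : ℕ × Fin p, g f w (x.1 * p + (x.2 : ℕ)) := by
    have h := Equiv.tsum_eq (Nat.divModEquiv p).symm (g f w)
    simp only [Nat.divModEquiv_symm_apply] at h
    exact h.symm
  rw [h1, Summable.tsum_prod' hcomp' (fun q => Summable.of_finite)]
  have hinner : ∀ q : ℕ, ∑' i : Fin p, g f w (q * p + (i : ℕ))
      = (f p : ℂ) * g f (w ^ p) q + (w ^ p) ^ q * Φ := by
    intro q
    rw [tsum_fintype]
    have hfin : ∑ i : Fin p, g f w (q * p + (i : ℕ))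
        = ∑ i ∈ Finset.range p, g f w (q * p + i) :=
      Fin.sum_univ_eq_sum_range (fun i => g f w (q * p + i)) p
    rw [hfin, Finset.sum_range_eq_add_Ico _ hpp]
    have hIco : Finset.Ico 1 p = Finset.Icc 1 (p - 1) := by
      rw [← Finset.Ico_add_one_right_eq_Icc]
      congr 1
      omega
    have htail : ∑ i ∈ Finset.Ico 1 p, g f w (q * p + i) = (w ^ p) ^ q * Φ := by
      rw [hΦ, Finset.mul_sum, ← hIco]
      apply Finset.sum_congr rfl
      intro i hi
      rw [Finset.mem_Ico] at hi
      have hi1 : 1 ≤ i := hi.1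
      have hile : i ≤ p - 1 := Nat.le_pred_of_lt hi.2
      have hne : q * p + i ≠ 0 := by positivity
      rw [g, if_neg hne, hfper q i hi1 hile, pow_add, pow_mul]
      ring
    have hhead : g f w (q * p + 0) = (f p : ℂ) * g f (w ^ p) q := by
      rcases Nat.eq_zero_or_pos q with hq | hq
      · simp [g, hq]
      · rw [add_zero, g, g, if_neg (by positivity), if_neg hq.ne',
          hfmul q p hq hpp, pow_mul]
        push_cast
        ring
    rw [hhead, htail]
  rw [tsum_congr hinner]
  have hs1 : Summable (fun q => (f p : ℂ) * g f (w ^ p) q) :=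
    (summable_g hfval hwp).mul_left _
  have hs2 : Summable (fun q => (w ^ p) ^ q * Φ) :=
    (summable_geometric_of_norm_lt_one hwp).mul_right _
  rw [Summable.tsum_add hs1 hs2, tsum_mul_left, tsum_mul_right,
    tsum_geometric_of_norm_lt_one hwp, div_eq_mul_inv, mul_comm Φ]

end Stmt15

/-- For a character-like function `f` associated to an odd prime
`p`, for `|z| < 1`: `F(z) = Σ_{k≥0} f(p)^k · Φ(z^(p^k)) / (1 - z^(p^(k+1)))`. -/
theorem stmt_15 (p : ℕ) (hp : p.Prime) (hpodd : Odd p)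
    (f : ℕ → ℤ)
    (hf1 : f 1 = 1)
    (hfmul : ∀ m n : ℕ, 1 ≤ m → 1 ≤ n → f (m * n) = f m * f n)
    (hfval : ∀ n : ℕ, 1 ≤ n → f n = 1 ∨ f n = -1)
    (hfper : ∀ k i : ℕ, 1 ≤ i → i ≤ p - 1 → f (k * p + i) = f i)
    (z : ℂ) (hz : ‖z‖ < 1) :
    (∑' n : ℕ, (f (n + 1) : ℂ) * z ^ (n + 1))
      = ∑' k : ℕ, ((f p : ℂ)) ^ k *
          (∑ i ∈ Finset.Icc 1 (p - 1), (f i : ℂ) * (z ^ (p ^ k)) ^ i)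
            / (1 - z ^ (p ^ (k + 1))) := by
  classical
  have hpp : 0 < p := hp.pos
  have hz0 : (0:ℝ) ≤ ‖z‖ := norm_nonneg z
  have hz1 : (0:ℝ) < 1 - ‖z‖ := by linarith
  -- Fs w = ∑' n, g f w n
  set Fs : ℂ → ℂ := fun w => ∑' n, Stmt15.g f w n with hFs
  -- norm of z^(p^k)
  have hnorm : ∀ k : ℕ, ‖z ^ p ^ k‖ = ‖z‖ ^ p ^ k := fun k => norm_pow z (p ^ k)
  have hle : ∀ k : ℕ, ‖z ^ p ^ k‖ ≤ ‖z‖ ^ k := by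
    intro k
    rw [hnorm]
    exact pow_le_pow_of_le_one hz0 hz.le (Nat.lt_pow_self (n := k) hp.one_lt).le
  have hlt : ∀ k : ℕ, ‖z ^ p ^ k‖ < 1 := by
    intro k
    rw [hnorm]
    exact pow_lt_one₀ hz0 hz (pow_ne_zero k hpp.ne')
  have hle1 : ∀ k : ℕ, ‖z ^ p ^ k‖ ≤ ‖z‖ := by
    intro k
    rw [hnorm]
    calc ‖z‖ ^ p ^ k ≤ ‖z‖ ^ 1 :=
          pow_le_pow_of_le_one hz0 hz.le (Nat.one_le_pow k p hpp)
      _ = ‖z‖ := pow_one _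
  have hfp : ‖(f p : ℂ)‖ = 1 := by
    rcases hfval p hpp with h | h <;> simp [h]
  -- the term of the RHS series
  set T : ℕ → ℂ := fun k => (f p : ℂ) ^ k *
      (∑ i ∈ Finset.Icc 1 (p - 1), (f i : ℂ) * (z ^ p ^ k) ^ i) / (1 - z ^ p ^ (k + 1))
    with hT
  -- z^(p^(k+1)) = (z^(p^k))^p
  have hzpow : ∀ k : ℕ, z ^ p ^ (k + 1) = (z ^ p ^ k) ^ p := by
    intro k; rw [← pow_mul, ← pow_succ]
  -- Partial sums (Claim A)
  have claimA : ∀ N : ℕ, ∑ k ∈ Finset.range N, T k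
      = Fs z - (f p : ℂ) ^ N * Fs (z ^ p ^ N) := by
    intro N
    induction N with
    | zero => simp [Fs]
    | succ N ih =>
      rw [Finset.sum_range_succ, ih]
      have heq := Stmt15.funEq hp hfmul hfval hfper (hlt N)
      simp only [hT, hFs]
      rw [hzpow N, heq]
      ring
  -- Claim B: the remainder tends to 0
  have claimB : Tendsto (fun N => (f p : ℂ) ^ N * Fs (z ^ p ^ N)) atTop (nhds 0) := by
    rw [tendsto_zero_iff_norm_tendsto_zero]
    apply squeeze_zero (fun N => norm_nonneg _) (g := fun N => ‖z‖ ^ N * (1 - ‖z‖)⁻¹)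
    · intro N
      rw [norm_mul, norm_pow, hfp, one_pow, one_mul]
      calc ‖Fs (z ^ p ^ N)‖ ≤ ‖z ^ p ^ N‖ * (1 - ‖z ^ p ^ N‖)⁻¹ :=
            Stmt15.norm_tsum_g_le hfval (hlt N)
        _ ≤ ‖z‖ ^ N * (1 - ‖z‖)⁻¹ := by
            apply mul_le_mul (hle N)
            · apply inv_anti₀ hz1
              have := hle1 N; linarith
            · apply inv_nonneg.mpr
              have := hlt N; linarith
            · positivity
    · have := (tendsto_pow_atTop_nhds_zero_of_lt_one hz0 hz).mul_const (1 - ‖z‖)⁻¹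
      simpa using this
  -- Claim C: summability of T
  have claimC : Summable T := by
    apply Summable.of_norm_bounded (g := fun k => (p - 1 : ℝ) * (1 - ‖z‖)⁻¹ * ‖z‖ ^ k)
    · exact (summable_geometric_of_lt_one hz0 hz).mul_left _
    · intro k
      simp only [hT]
      rw [norm_div, norm_mul, norm_pow, hfp, one_pow, one_mul]
      have hden : 1 - ‖z‖ ≤ ‖1 - z ^ p ^ (k + 1)‖ := by
        have h1 : ‖(1:ℂ)‖ - ‖z ^ p ^ (k + 1)‖ ≤ ‖1 - z ^ p ^ (k + 1)‖ :=
          norm_sub_norm_le _ _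
        have h2 : ‖z ^ p ^ (k + 1)‖ ≤ ‖z‖ := hle1 (k + 1)
        simp only [norm_one] at h1
        linarith
      have hnum : ‖∑ i ∈ Finset.Icc 1 (p - 1), (f i : ℂ) * (z ^ p ^ k) ^ i‖
          ≤ (p - 1 : ℝ) * ‖z‖ ^ k := by
        calc ‖∑ i ∈ Finset.Icc 1 (p - 1), (f i : ℂ) * (z ^ p ^ k) ^ i‖
            ≤ ∑ i ∈ Finset.Icc 1 (p - 1), ‖(f i : ℂ) * (z ^ p ^ k) ^ i‖ :=
              norm_sum_le _ _
          _ ≤ ∑ i ∈ Finset.Icc 1 (p - 1), ‖z‖ ^ k := by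
              apply Finset.sum_le_sum
              intro i hi
              rw [Finset.mem_Icc] at hi
              have hfi : ‖(f i : ℂ)‖ = 1 := by
                rcases hfval i hi.1 with h | h <;> simp [h]
              rw [norm_mul, hfi, one_mul, norm_pow]
              calc ‖z ^ p ^ k‖ ^ i ≤ ‖z ^ p ^ k‖ ^ 1 :=
                    pow_le_pow_of_le_one (norm_nonneg _) (hlt k).le hi.1
                _ = ‖z ^ p ^ k‖ := pow_one _
                _ ≤ ‖z‖ ^ k := hle k
          _ = (p - 1 : ℝ) * ‖z‖ ^ k := by
              rw [Finset.sum_const, Nat.card_Icc]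
              simp [Nat.cast_sub hpp, nsmul_eq_mul]
      calc ‖∑ i ∈ Finset.Icc 1 (p - 1), (f i : ℂ) * (z ^ p ^ k) ^ i‖
            / ‖1 - z ^ p ^ (k + 1)‖
          ≤ ((p - 1 : ℝ) * ‖z‖ ^ k) / (1 - ‖z‖) := by
            have hp1 : (1:ℝ) ≤ (p:ℝ) := by exact_mod_cast hpp
            apply div_le_div₀ (by nlinarith [pow_nonneg hz0 k]) hnum hz1 hden
        _ = (p - 1 : ℝ) * (1 - ‖z‖)⁻¹ * ‖z‖ ^ k := by
            rw [div_eq_mul_inv]; ring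
  -- conclude: tsum T = Fs z
  have htendsto : Tendsto (fun N => ∑ k ∈ Finset.range N, T k) atTop (nhds (Fs z)) := by
    have : Tendsto (fun N => Fs z - (f p : ℂ) ^ N * Fs (z ^ p ^ N)) atTop
        (nhds (Fs z - 0)) := tendsto_const_nhds.sub claimB
    rw [sub_zero] at this
    exact (tendsto_congr claimA).mpr this
  have hT_sum : (∑' k, T k) = Fs z :=
    tendsto_nhds_unique claimC.hasSum.tendsto_sum_nat htendsto
  -- LHS = Fs z
  have hLHS : (∑' n : ℕ, (f (n + 1) : ℂ) * z ^ (n + 1)) = Fs z := by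
    show _ = ∑' n, Stmt15.g f z n
    rw [Summable.tsum_eq_zero_add (Stmt15.summable_g hfval hz)]
    have h0 : Stmt15.g f z 0 = 0 := by simp [Stmt15.g]
    rw [h0, zero_add]
    apply tsum_congr
    intro n
    rw [Stmt15.g, if_neg (Nat.succ_ne_zero n)]
  rw [hLHS, ← hT_sum]
end
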